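/- arXiv:2404.03343 — 6 statements merged into one kernel-verified Lean document; each statement's English description precedes it below -/
import Mathlib

section
/- Let N ≥ 1 and 0 < γ ≤ 1. Then there exists no classical solution of problem (P_γ) on the half space ℝ^N_+. -/
open Real Set Filter

/-- The (pointwise) Laplacian of `u : ℝ^N → ℝ`, as the sum of the second
partial derivatives in the coordinate directions. -/
noncomputable def lapl {N : ℕ} (u : EuclideanSpace ℝ (Fin N) → ℝ)
    (x : EuclideanSpace ℝ (Fin N)) : ℝ :=
  ∑ i : Fin N, fderiv ℝ (fun y => fderiv ℝ u y (EuclideanSpace.single i (1 : ℝ))) x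
    (EuclideanSpace.single i (1 : ℝ))

/-- The last coordinate index of `Fin N` (for `N ≥ 1`), playing the role of `x_N`. -/
def lastIdx (N : ℕ) (hN : 1 ≤ N) : Fin N := ⟨N - 1, by omega⟩

/-- The open half space `ℝ^N_+ = {x ∈ ℝ^N : x_N > 0}`. -/
def halfSpace (N : ℕ) (hN : 1 ≤ N) : Set (EuclideanSpace ℝ (Fin N)) :=
  {x | 0 < x (lastIdx N hN)}

/-- A classical solution of problem `(P_γ)` on the half space:
`u ∈ C²(ℝ^N_+) ∩ C(closure ℝ^N_+)`, `u > 0` in `ℝ^N_+`, `u = 0` on `{x_N = 0}`,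
and `-Δu = u^{-γ}` in `ℝ^N_+`. -/
structure IsClassicalSolution (N : ℕ) (hN : 1 ≤ N) (γ : ℝ)
    (u : EuclideanSpace ℝ (Fin N) → ℝ) : Prop where
  smooth : ContDiffOn ℝ 2 u (halfSpace N hN)
  cont : ContinuousOn u (closure (halfSpace N hN))
  pos : ∀ x ∈ halfSpace N hN, 0 < u x
  bdry : ∀ x : EuclideanSpace ℝ (Fin N), x (lastIdx N hN) = 0 → u x = 0
  eq : ∀ x ∈ halfSpace N hN, -lapl u x = (u x) ^ (-γ)


/-- 1D second derivative test at a local max. -/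
theorem aux1d {g : ℝ → ℝ} {d : ℝ}
    (hg : ∀ᶠ s in nhds (0:ℝ), DifferentiableAt ℝ g s)
    (hd : HasDerivAt (deriv g) d 0) (hmax : IsLocalMax g 0) : d ≤ 0 := by
  by_contra hpos
  push_neg at hpos
  have h0 : deriv g 0 = 0 := hmax.deriv_eq_zero
  have hs := hasDerivAt_iff_tendsto_slope.1 hd
  have hev : ∀ᶠ s in nhdsWithin (0:ℝ) {(0:ℝ)}ᶜ, 0 < slope (deriv g) 0 s :=
    hs.eventually (eventually_gt_nhds hpos)
  rw [eventually_nhdsWithin_iff] at hev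
  have h1 : ∀ᶠ s in nhds (0:ℝ),
      DifferentiableAt ℝ g s ∧ g s ≤ g 0 ∧ (s ∈ ({(0:ℝ)}ᶜ : Set ℝ) → 0 < slope (deriv g) 0 s) :=
    hg.and (hmax.and hev)
  rcases Metric.eventually_nhds_iff.1 h1 with ⟨ε, hε, hball⟩
  set δ := ε / 2 with hδ
  have hδpos : 0 < δ := by positivity
  have hmem : ∀ s ∈ Icc (0:ℝ) δ, DifferentiableAt ℝ g s ∧ g s ≤ g 0 ∧
      (s ∈ ({(0:ℝ)}ᶜ : Set ℝ) → 0 < slope (deriv g) 0 s) := by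
    intro s hs
    apply hball
    have : |s| ≤ δ := by
      rw [abs_le]; constructor <;> [linarith [hs.1]; linarith [hs.2]]
    calc dist s 0 = |s| := by simp [Real.dist_eq]
    _ ≤ δ := this
    _ < ε := by rw [hδ]; linarith
  have hmono : StrictMonoOn g (Icc (0:ℝ) δ) := by
    apply strictMonoOn_of_deriv_pos (convex_Icc 0 δ)
    · exact fun s hs => ((hmem s hs).1).continuousAt.continuousWithinAt
    · intro s hs
      rw [interior_Icc] at hs
      have hsne : s ∈ ({(0:ℝ)}ᶜ : Set ℝ) := by
        simp only [mem_compl_iff, mem_singleton_iff]; exact ne_of_gt hs.1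
      have hslope := (hmem s ⟨le_of_lt hs.1, le_of_lt hs.2⟩).2.2 hsne
      have heq : slope (deriv g) 0 s = deriv g s / s := by
        simp [slope, h0]; ring
      rw [heq] at hslope
      have := mul_pos hslope hs.1
      rw [div_mul_cancel₀] at this
      · exact this
      · exact ne_of_gt hs.1
  have hlt : g 0 < g δ :=
    hmono ⟨le_refl 0, le_of_lt hδpos⟩ ⟨le_of_lt hδpos, le_refl δ⟩ hδpos
  have hle : g δ ≤ g 0 := (hmem δ ⟨le_of_lt hδpos, le_refl δ⟩).2.1
  linarith

/-- Second derivative test along direction `v` at a local maximum. -/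
theorem secondDeriv_nonpos {E : Type*} [NormedAddCommGroup E] [NormedSpace ℝ E]
    {f : E → ℝ} {z : E} {v : E}
    (hf : ∀ᶠ y in nhds z, DifferentiableAt ℝ f y)
    (hf2 : DifferentiableAt ℝ (fun y => fderiv ℝ f y v) z)
    (hmax : IsLocalMax f z) :
    fderiv ℝ (fun y => fderiv ℝ f y v) z v ≤ 0 := by
  set c : ℝ → E := fun s => z + s • v with hc_def
  have hc : ∀ s : ℝ, HasDerivAt c v s := by
    intro s
    simpa [hc_def] using ((hasDerivAt_id s).smul_const v).const_add z
  have hc0 : c 0 = z := by simp [hc_def]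
  have hcont : Continuous c := by
    apply continuous_const.add (continuous_id.smul continuous_const)
  have htend : Tendsto c (nhds (0:ℝ)) (nhds z) := by
    have := hcont.tendsto 0
    rwa [hc0] at this
  have hdiffc : ∀ᶠ s in nhds (0:ℝ), DifferentiableAt ℝ f (c s) := htend.eventually hf
  have hder : ∀ᶠ s in nhds (0:ℝ), HasDerivAt (f ∘ c) (fderiv ℝ f (c s) v) s :=
    hdiffc.mono fun s hs => hs.hasFDerivAt.comp_hasDerivAt s (hc s)
  have hderiv_eq : (fun s => deriv (f ∘ c) s) =ᶠ[nhds (0:ℝ)]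
      (fun s => fderiv ℝ f (c s) v) :=
    hder.mono fun s hs => hs.deriv
  have hD0 : HasDerivAt (fun s => fderiv ℝ f (c s) v)
      (fderiv ℝ (fun y => fderiv ℝ f y v) z v) 0 := by
    rw [← hc0] at hf2
    have h := hf2.hasFDerivAt.comp_hasDerivAt 0 (hc 0)
    rw [hc0] at h
    exact h
  have hD : HasDerivAt (deriv (f ∘ c)) (fderiv ℝ (fun y => fderiv ℝ f y v) z v) 0 :=
    hD0.congr_of_eventuallyEq hderiv_eq
  have hmax' : IsLocalMax (f ∘ c) 0 := by
    have h := htend.eventually hmax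
    refine h.mono fun s hs => ?_
    simpa [hc0] using hs
  exact aux1d (hder.mono fun s hs => hs.differentiableAt) hD hmax'

noncomputable def pr {N : ℕ} (i : Fin N) : EuclideanSpace ℝ (Fin N) →L[ℝ] ℝ :=
  EuclideanSpace.proj i

lemma pr_apply {N : ℕ} (i : Fin N) (x : EuclideanSpace ℝ (Fin N)) : pr i x = x i := rfl

lemma pr_single {N : ℕ} (i j : Fin N) :
    pr i (EuclideanSpace.single j (1:ℝ)) = if i = j then 1 else 0 := by
  rw [pr_apply, EuclideanSpace.single_apply]

lemma hasFDerivAt_prodFun {N : ℕ} (f f' : Fin N → ℝ → ℝ) (x : EuclideanSpace ℝ (Fin N))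
    (hf : ∀ i, HasDerivAt (f i) (f' i (x i)) (x i)) :
    HasFDerivAt (fun y : EuclideanSpace ℝ (Fin N) => ∏ i, f i (y i))
      (∑ i, (∏ j ∈ Finset.univ.erase i, f j (x j)) • ((f' i (x i)) • (pr i))) x := by
  have h : ∀ i ∈ Finset.univ, HasFDerivAt
      (fun y : EuclideanSpace ℝ (Fin N) => f i (y i)) ((f' i (x i)) • pr i) x :=
    fun i _ => (hf i).comp_hasFDerivAt x (pr i).hasFDerivAt
  exact HasFDerivAt.finset_prod h

lemma fderiv_prodFun_single {N : ℕ} (f f' : Fin N → ℝ → ℝ) (x : EuclideanSpace ℝ (Fin N))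
    (hf : ∀ i, HasDerivAt (f i) (f' i (x i)) (x i)) (k : Fin N) :
    fderiv ℝ (fun y : EuclideanSpace ℝ (Fin N) => ∏ i, f i (y i)) x
        (EuclideanSpace.single k (1:ℝ))
      = f' k (x k) * ∏ j ∈ Finset.univ.erase k, f j (x j) := by
  rw [(hasFDerivAt_prodFun f f' x hf).fderiv]
  rw [ContinuousLinearMap.sum_apply]
  rw [Finset.sum_eq_single k]
  · simp [pr_single]
    ring
  · intro i _ hik
    simp [pr_single, if_neg hik]
  · intro h
    exact absurd (Finset.mem_univ k) h

theorem prodFun_facts {N : ℕ} (f f' f'' : Fin N → ℝ → ℝ) (V : Fin N → Set ℝ)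
    (hV : ∀ i, IsOpen (V i))
    (hf : ∀ i, ∀ t ∈ V i, HasDerivAt (f i) (f' i t) t)
    (hf' : ∀ i, ∀ t ∈ V i, HasDerivAt (f' i) (f'' i t) t)
    (x : EuclideanSpace ℝ (Fin N)) (hx : ∀ i, x i ∈ V i) :
    DifferentiableAt ℝ (fun y : EuclideanSpace ℝ (Fin N) => ∏ i, f i (y i)) x
    ∧ (∀ k : Fin N, DifferentiableAt ℝ (fun y : EuclideanSpace ℝ (Fin N) =>
        fderiv ℝ (fun y' : EuclideanSpace ℝ (Fin N) => ∏ i, f i (y' i)) y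
          (EuclideanSpace.single k (1:ℝ))) x)
    ∧ lapl (fun y : EuclideanSpace ℝ (Fin N) => ∏ i, f i (y i)) x
        = ∑ k, f'' k (x k) * ∏ j ∈ Finset.univ.erase k, f j (x j) := by
  have hVV : ∀ᶠ y in nhds x, ∀ i, y i ∈ V i := by
    rw [eventually_all]
    intro i
    have : Tendsto (fun y : EuclideanSpace ℝ (Fin N) => y i) (nhds x) (nhds (x i)) :=
      ((pr i).continuous.tendsto x)
    exact this.eventually ((hV i).eventually_mem (hx i))
  -- data for the modified families
  have key : ∀ k : Fin N,
      ((fun y : EuclideanSpace ℝ (Fin N) =>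
          fderiv ℝ (fun y' : EuclideanSpace ℝ (Fin N) => ∏ i, f i (y' i)) y
            (EuclideanSpace.single k (1:ℝ)))
        =ᶠ[nhds x] (fun y : EuclideanSpace ℝ (Fin N) =>
          ∏ i, (fun j => if j = k then f' k else f j) i (y i))) := by
    intro k
    refine hVV.mono fun y hy => ?_
    show fderiv ℝ (fun y' : EuclideanSpace ℝ (Fin N) => ∏ i, f i (y' i)) y
        (EuclideanSpace.single k (1:ℝ)) = _
    rw [fderiv_prodFun_single f f' y (fun i => hf i _ (hy i)) k]
    show _ = ∏ i, (fun j => if j = k then f' k else f j) i (y i)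
    rw [← Finset.mul_prod_erase Finset.univ
      (fun i => (fun j => if j = k then f' k else f j) i (y i)) (Finset.mem_univ k)]
    simp only [if_pos rfl]
    congr 1
    refine Finset.prod_congr rfl fun j hj => ?_
    simp only [if_neg (Finset.ne_of_mem_erase hj)]
  have hgderiv : ∀ k : Fin N, ∀ i, ∀ t ∈ V i,
      HasDerivAt ((fun j => if j = k then f' k else f j) i)
        ((fun j => if j = k then f'' k else f' j) i t) t := by
    intro k i t ht
    by_cases hik : i = k
    · subst hik; simp only [if_pos rfl]; exact hf' i t ht
    · simp only [if_neg hik]; exact hf i t ht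
  refine ⟨(hasFDerivAt_prodFun f f' x fun i => hf i _ (hx i)).differentiableAt, ?_, ?_⟩
  · intro k
    rw [(key k).differentiableAt_iff]
    exact (hasFDerivAt_prodFun _ _ x fun i => hgderiv k i _ (hx i)).differentiableAt
  · unfold lapl
    refine Finset.sum_congr rfl fun k _ => ?_
    rw [(key k).fderiv_eq]
    rw [fderiv_prodFun_single _ _ x (fun i => hgderiv k i _ (hx i)) k]
    simp only [if_pos rfl]
    congr 1
    refine Finset.prod_congr rfl fun j hj => ?_
    rw [if_neg (Finset.ne_of_mem_erase hj)]

section Geometry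

variable {N : ℕ} {hN : 1 ≤ N}

lemma coord_le_norm (x : EuclideanSpace ℝ (Fin N)) (i : Fin N) : |x i| ≤ ‖x‖ := by
  rw [EuclideanSpace.norm_eq]
  have h1 : |x i| = Real.sqrt (‖x i‖ ^ 2) := by
    rw [Real.sqrt_sq_eq_abs]; simp
  rw [h1]
  apply Real.sqrt_le_sqrt
  exact Finset.single_le_sum (f := fun j => ‖x j‖ ^ 2) (fun j _ => by positivity) (Finset.mem_univ i)

lemma isOpen_halfSpace : IsOpen (halfSpace N hN) := by
  have : halfSpace N hN = (pr (lastIdx N hN)) ⁻¹' (Ioi 0) := rfl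
  rw [this]
  exact isOpen_Ioi.preimage (pr (lastIdx N hN)).continuous

lemma mem_closure_halfSpace (x : EuclideanSpace ℝ (Fin N)) (hx : 0 ≤ x (lastIdx N hN)) :
    x ∈ closure (halfSpace N hN) := by
  set l := lastIdx N hN
  have htend : Tendsto (fun t : ℝ => x + t • EuclideanSpace.single l (1:ℝ))
      (nhdsWithin 0 (Ioi 0)) (nhds x) := by
    have hcont : Continuous (fun t : ℝ => x + t • EuclideanSpace.single l (1:ℝ)) := by
      apply continuous_const.add (continuous_id.smul continuous_const)
    have := hcont.tendsto 0
    simp only [zero_smul, add_zero] at this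
    exact this.mono_left nhdsWithin_le_nhds
  apply mem_closure_of_tendsto htend
  filter_upwards [self_mem_nhdsWithin] with t ht
  show 0 < (x + t • EuclideanSpace.single l (1:ℝ)) l
  have : (x + t • EuclideanSpace.single l (1:ℝ)) l = x l + t := by
    simp [EuclideanSpace.single_apply]
  rw [this]
  have : (0:ℝ) < t := ht
  linarith

/-- The closed box with horizontal half-width `R` and vertical extent `[0,L]`,
centered (horizontally) at `c`. -/
def box (hN : 1 ≤ N) (c : EuclideanSpace ℝ (Fin N)) (R L : ℝ) :
    Set (EuclideanSpace ℝ (Fin N)) :=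
  {x | ∀ i : Fin N, x i ∈ (if i = lastIdx N hN then Icc 0 L else Icc (c i - R) (c i + R))}

/-- The corresponding open box. -/
def obox (hN : 1 ≤ N) (c : EuclideanSpace ℝ (Fin N)) (R L : ℝ) :
    Set (EuclideanSpace ℝ (Fin N)) :=
  {x | ∀ i : Fin N, x i ∈ (if i = lastIdx N hN then Ioo 0 L else Ioo (c i - R) (c i + R))}

lemma isOpen_obox (c : EuclideanSpace ℝ (Fin N)) (R L : ℝ) : IsOpen (obox hN c R L) := by
  have : obox hN c R L = ⋂ i : Fin N,
      (pr i) ⁻¹' (if i = lastIdx N hN then Ioo 0 L else Ioo (c i - R) (c i + R)) := by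
    ext x; simp [obox, pr_apply]
  rw [this]
  apply isOpen_iInter_of_finite
  intro i
  by_cases h : i = lastIdx N hN
  · rw [if_pos h]; exact isOpen_Ioo.preimage (pr _).continuous
  · rw [if_neg h]; exact isOpen_Ioo.preimage (pr _).continuous

lemma isCompact_box (c : EuclideanSpace ℝ (Fin N)) (R L : ℝ) (hR : 0 ≤ R) (hL : 0 ≤ L) :
    IsCompact (box hN c R L) := by
  have hclosed : IsClosed (box hN c R L) := by
    have : box hN c R L = ⋂ i : Fin N,
        (pr i) ⁻¹' (if i = lastIdx N hN then Icc 0 L else Icc (c i - R) (c i + R)) := by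
      ext x; simp [box, pr_apply]
    rw [this]
    apply isClosed_iInter
    intro i
    by_cases h : i = lastIdx N hN
    · rw [if_pos h]; exact isClosed_Icc.preimage (pr _).continuous
    · rw [if_neg h]; exact isClosed_Icc.preimage (pr _).continuous
  set m := L + R + ‖c‖ with hm
  have hmpos : 0 ≤ m := by positivity
  apply (isCompact_closedBall (0 : EuclideanSpace ℝ (Fin N)) (Real.sqrt (N * m^2))).of_isClosed_subset hclosed
  intro x hx
  rw [Metric.mem_closedBall, dist_zero_right, EuclideanSpace.norm_eq]
  apply Real.sqrt_le_sqrt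
  have hcoord : ∀ i : Fin N, ‖x i‖ ^ 2 ≤ m ^ 2 := by
    intro i
    have hb : |x i| ≤ m := by
      have hxi := hx i
      by_cases h : i = lastIdx N hN
      · rw [if_pos h] at hxi
        have h1 : 0 ≤ ‖c‖ := norm_nonneg _
        rw [abs_le]; exact ⟨by linarith [hxi.1], by linarith [hxi.2]⟩
      · rw [if_neg h] at hxi
        have h1 : |c i| ≤ ‖c‖ := coord_le_norm c i
        rw [abs_le] at h1 ⊢
        exact ⟨by linarith [hxi.1, h1.1], by linarith [hxi.2, h1.2]⟩
    calc ‖x i‖ ^ 2 = |x i| ^ 2 := by rw [Real.norm_eq_abs]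
    _ ≤ m ^ 2 := by
        have h0 : (0:ℝ) ≤ |x i| := abs_nonneg _
        apply sq_le_sq'
        · linarith
        · exact hb
  calc ∑ i : Fin N, ‖x i‖ ^ 2 ≤ ∑ _i : Fin N, m ^ 2 :=
        Finset.sum_le_sum fun i _ => hcoord i
  _ = N * m ^ 2 := by rw [Finset.sum_const, Finset.card_univ, Fintype.card_fin, nsmul_eq_mul]

lemma obox_subset_box (c : EuclideanSpace ℝ (Fin N)) (R L : ℝ) :
    obox hN c R L ⊆ box hN c R L := by
  intro x hx i
  have := hx i
  by_cases h : i = lastIdx N hN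
  · rw [if_pos h] at this ⊢; exact Ioo_subset_Icc_self this
  · rw [if_neg h] at this ⊢; exact Ioo_subset_Icc_self this

lemma obox_subset_halfSpace (c : EuclideanSpace ℝ (Fin N)) (R L : ℝ) :
    obox hN c R L ⊆ halfSpace N hN := by
  intro x hx
  have := hx (lastIdx N hN)
  rw [if_pos rfl] at this
  exact this.1

lemma box_subset_nonneg (c : EuclideanSpace ℝ (Fin N)) (R L : ℝ) :
    ∀ x ∈ box hN c R L, 0 ≤ x (lastIdx N hN) := by
  intro x hx
  have := hx (lastIdx N hN)
  rw [if_pos rfl] at this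
  exact this.1

end Geometry


section Comparison

variable {N : ℕ} {hN : 1 ≤ N} {γ : ℝ} {u : EuclideanSpace ℝ (Fin N) → ℝ}

lemma sol_diff (S : IsClassicalSolution N hN γ u) :
    ∀ y ∈ halfSpace N hN, DifferentiableAt ℝ u y := fun y hy =>
  (S.smooth.differentiableOn two_ne_zero).differentiableAt (isOpen_halfSpace.mem_nhds hy)

lemma sol_diff2 (S : IsClassicalSolution N hN γ u) (k : Fin N) :
    ∀ y ∈ halfSpace N hN, DifferentiableAt ℝ
      (fun x => fderiv ℝ u x (EuclideanSpace.single k (1:ℝ))) y := by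
  have h2 : ContDiffOn ℝ 2 u (halfSpace N hN) := S.smooth
  rw [show (2 : WithTop ℕ∞) = 1 + 1 from rfl,
    contDiffOn_succ_iff_fderiv_of_isOpen isOpen_halfSpace] at h2
  have h3 : ContDiffOn ℝ 1 (fun y => fderiv ℝ u y (EuclideanSpace.single k (1:ℝ)))
      (halfSpace N hN) := h2.2.2.clm_apply contDiffOn_const
  intro y hy
  exact (h3.differentiableOn one_ne_zero).differentiableAt (isOpen_halfSpace.mem_nhds hy)

theorem comparison (hγ0 : 0 < γ) (hγ1 : γ ≤ 1) (S : IsClassicalSolution N hN γ u)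
    {w : EuclideanSpace ℝ (Fin N) → ℝ} {B O : Set (EuclideanSpace ℝ (Fin N))}
    (hBc : IsCompact B) (hO : IsOpen O) (hOB : O ⊆ B)
    (hBh : ∀ x ∈ B, 0 ≤ x (lastIdx N hN)) (hOh : O ⊆ halfSpace N hN)
    (hwc : ContinuousOn w B)
    (hw1 : ∀ y ∈ O, DifferentiableAt ℝ w y)
    (hw2 : ∀ k : Fin N, ∀ y ∈ O, DifferentiableAt ℝ
        (fun x => fderiv ℝ w x (EuclideanSpace.single k (1:ℝ))) y)
    (hsub : ∀ z ∈ O, 0 < w z → (-lapl w z ≤ 1 ∧ (-lapl w z) * w z ≤ 1))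
    (hbd : ∀ z ∈ B, z ∉ O → w z ≤ u z) :
    ∀ x ∈ B, w x ≤ u x := by
  intro x hxB
  by_contra hcon
  push_neg at hcon
  have hBclos : B ⊆ closure (halfSpace N hN) := fun y hy => mem_closure_halfSpace y (hBh y hy)
  have hucont : ContinuousOn u B := S.cont.mono hBclos
  have hφcont : ContinuousOn (fun y => w y - u y) B := hwc.sub hucont
  obtain ⟨z, hzB, hz⟩ := hBc.exists_isMaxOn ⟨x, hxB⟩ hφcont
  have hφx : 0 < w x - u x := by linarith
  have hφz : 0 < w z - u z := lt_of_lt_of_le hφx (by simpa using hz hxB)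
  have hzO : z ∈ O := by
    by_contra hzo
    have := hbd z hzB hzo
    linarith
  have hzH : z ∈ halfSpace N hN := hOh hzO
  have huz : 0 < u z := S.pos z hzH
  have hwz : u z < w z := by linarith
  have hwzpos : 0 < w z := lt_trans huz hwz
  have hlocmax : IsLocalMax (fun y => w y - u y) z := by
    filter_upwards [hO.mem_nhds hzO] with y hy
    exact hz (hOB hy)
  have hdiff_ev : ∀ᶠ y in nhds z, DifferentiableAt ℝ (fun y' => w y' - u y') y := by
    filter_upwards [hO.mem_nhds hzO] with y hy
    exact (hw1 y hy).sub (sol_diff S y (hOh hy))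
  have hkey : ∀ k : Fin N,
      fderiv ℝ (fun y => fderiv ℝ (fun y' => w y' - u y') y (EuclideanSpace.single k (1:ℝ))) z
        (EuclideanSpace.single k (1:ℝ))
      = fderiv ℝ (fun y => fderiv ℝ w y (EuclideanSpace.single k (1:ℝ))) z
          (EuclideanSpace.single k (1:ℝ))
        - fderiv ℝ (fun y => fderiv ℝ u y (EuclideanSpace.single k (1:ℝ))) z
          (EuclideanSpace.single k (1:ℝ))
      ∧ fderiv ℝ (fun y => fderiv ℝ (fun y' => w y' - u y') y (EuclideanSpace.single k (1:ℝ))) z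
          (EuclideanSpace.single k (1:ℝ)) ≤ 0 := by
    intro k
    have hEq : (fun y => fderiv ℝ (fun y' => w y' - u y') y (EuclideanSpace.single k (1:ℝ)))
        =ᶠ[nhds z] (fun y => fderiv ℝ w y (EuclideanSpace.single k (1:ℝ))
                      - fderiv ℝ u y (EuclideanSpace.single k (1:ℝ))) := by
      filter_upwards [hO.mem_nhds hzO] with y hy
      show fderiv ℝ (fun y' => w y' - u y') y (EuclideanSpace.single k (1:ℝ)) = _
      rw [fderiv_fun_sub (hw1 y hy) (sol_diff S y (hOh hy))]
      rfl
    have hdiffR : DifferentiableAt ℝ (fun y => fderiv ℝ w y (EuclideanSpace.single k (1:ℝ))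
        - fderiv ℝ u y (EuclideanSpace.single k (1:ℝ))) z :=
      (hw2 k z hzO).sub (sol_diff2 S k z hzH)
    have hdiffL : DifferentiableAt ℝ
        (fun y => fderiv ℝ (fun y' => w y' - u y') y (EuclideanSpace.single k (1:ℝ))) z :=
      hEq.differentiableAt_iff.2 hdiffR
    constructor
    · rw [hEq.fderiv_eq, fderiv_fun_sub (hw2 k z hzO) (sol_diff2 S k z hzH)]
      rfl
    · exact secondDeriv_nonpos hdiff_ev hdiffL hlocmax
  have hlapl : lapl w z - lapl u z ≤ 0 := by
    have h1 : lapl w z - lapl u z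
        = ∑ k : Fin N, fderiv ℝ (fun y => fderiv ℝ (fun y' => w y' - u y') y
            (EuclideanSpace.single k (1:ℝ))) z (EuclideanSpace.single k (1:ℝ)) := by
      unfold lapl
      rw [← Finset.sum_sub_distrib]
      exact (Finset.sum_congr rfl fun k _ => ((hkey k).1).symm)
    rw [h1]
    exact Finset.sum_nonpos fun k _ => (hkey k).2
  have heq := S.eq z hzH
  have hsubz := hsub z hzO hwzpos
  have h2 : (u z) ^ (-γ) ≤ -lapl w z := by rw [← heq]; linarith
  have hu1 : 1 ≤ u z := by
    by_contra hu1
    push_neg at hu1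
    have : 1 < (u z) ^ (-γ) := by
      rw [Real.one_lt_rpow_iff_of_pos huz]
      exact Or.inr ⟨hu1, by linarith⟩
    linarith [hsubz.1]
  have h3 : (u z)⁻¹ ≤ (u z) ^ (-γ) := by
    rw [show (u z)⁻¹ = (u z) ^ (-1 : ℝ) from (Real.rpow_neg_one (u z)).symm]
    exact Real.rpow_le_rpow_of_exponent_le hu1 (by linarith)
  have h4 : -lapl w z ≤ (w z)⁻¹ := by
    rw [show (w z)⁻¹ = 1 / w z from (one_div (w z)).symm]
    exact (le_div_iff₀ hwzpos).2 hsubz.2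
  have h5 : (u z)⁻¹ ≤ (w z)⁻¹ := le_trans h3 (le_trans h2 h4)
  have h6 : w z ≤ u z := (inv_le_inv₀ huz hwzpos).1 h5
  linarith

end Comparison



section OneD

lemma par_deriv (L : ℝ) (s : ℝ) :
    HasDerivAt (fun s : ℝ => (s * (L - s))/(4*L)) ((L - 2*s)/(4*L)) s := by
  have h := ((hasDerivAt_id s).mul ((hasDerivAt_const s L).sub (hasDerivAt_id s))).div_const (4*L)
  refine h.congr_deriv ?_
  simp; ring

lemma par_deriv2 (L : ℝ) (s : ℝ) :
    HasDerivAt (fun s : ℝ => (L - 2*s)/(4*L)) (-(2/(4*L))) s := by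
  have h := ((hasDerivAt_const s L).sub ((hasDerivAt_id s).const_mul 2)).div_const (4*L)
  refine h.congr_deriv ?_
  simp; ring

lemma cosf_deriv (q c : ℝ) (s : ℝ) :
    HasDerivAt (fun s : ℝ => Real.cos (q * (s - c))) (-(q * Real.sin (q * (s - c)))) s := by
  have harg : HasDerivAt (fun s : ℝ => q * (s - c)) q s := by
    simpa using ((hasDerivAt_id s).sub_const c).const_mul q
  have h := (Real.hasDerivAt_cos (q * (s - c))).comp s harg
  refine h.congr_deriv ?_
  ring

lemma cosf_deriv2 (q c : ℝ) (s : ℝ) :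
    HasDerivAt (fun s : ℝ => -(q * Real.sin (q * (s - c))))
      (-(q^2 * Real.cos (q * (s - c)))) s := by
  have harg : HasDerivAt (fun s : ℝ => q * (s - c)) q s := by
    simpa using ((hasDerivAt_id s).sub_const c).const_mul q
  have h := (((Real.hasDerivAt_sin (q * (s - c))).comp s harg).const_mul q).neg
  refine h.congr_deriv ?_
  ring

end OneD

section Construction

variable {N : ℕ} {hN : 1 ≤ N}

/-- The frequency of the cosine factors. -/
noncomputable def qq (N : ℕ) (L : ℝ) : ℝ := π / (16 * N * L)

/-- The product-type comparison function: a vertical profile `P` times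
cosine factors in all horizontal directions. -/
noncomputable def con (hN : 1 ≤ N) (P : ℝ → ℝ) (c : EuclideanSpace ℝ (Fin N)) (L : ℝ) :
    EuclideanSpace ℝ (Fin N) → ℝ :=
  fun y => ∏ i, (if i = lastIdx N hN then P
    else fun s => Real.cos (qq N L * (s - c i))) (y i)

/-- The product of the cosine factors alone. -/
noncomputable def conC (hN : 1 ≤ N) (c : EuclideanSpace ℝ (Fin N)) (L : ℝ) :
    EuclideanSpace ℝ (Fin N) → ℝ :=
  fun y => ∏ j ∈ Finset.univ.erase (lastIdx N hN), Real.cos (qq N L * (y j - c j))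

lemma qq_pos (L : ℝ) (hL : 0 < L) (hNpos : 0 < N) : 0 < qq N L := by
  unfold qq
  have : (0:ℝ) < N := by exact_mod_cast hNpos
  positivity

lemma qq_le (L : ℝ) (hL : 1 ≤ L) (hNpos : 0 < N) : qq N L ≤ 1/(4*N*L) := by
  unfold qq
  have hN' : (1:ℝ) ≤ N := by exact_mod_cast hNpos
  rw [div_le_div_iff₀ (by positivity) (by positivity)]
  have h4 : (0:ℝ) ≤ 4*N*L := by positivity
  nlinarith [mul_nonneg (by linarith [Real.pi_le_four] : (0:ℝ) ≤ 4 - π) h4]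

lemma qq_mul_R (L : ℝ) (hL : 0 < L) (hNpos : 0 < N) : qq N L * (8*N*L) = π/2 := by
  unfold qq
  have hN' : (0:ℝ) < N := by exact_mod_cast hNpos
  field_simp
  ring

lemma con_eq_mul (P : ℝ → ℝ) (c : EuclideanSpace ℝ (Fin N)) (L : ℝ)
    (y : EuclideanSpace ℝ (Fin N)) :
    con hN P c L y = P (y (lastIdx N hN)) * conC hN c L y := by
  unfold con conC
  rw [← Finset.mul_prod_erase Finset.univ _ (Finset.mem_univ (lastIdx N hN))]
  rw [if_pos rfl]
  congr 1
  refine Finset.prod_congr rfl fun j hj => ?_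
  rw [if_neg (Finset.ne_of_mem_erase hj)]

lemma conC_pos_le_one (c : EuclideanSpace ℝ (Fin N)) (L : ℝ) (hL : 0 < L)
    (z : EuclideanSpace ℝ (Fin N)) (hz : z ∈ obox hN c (8*N*L) L) :
    0 < conC hN c L z ∧ conC hN c L z ≤ 1 := by
  have hNpos : 0 < N := hN
  have hq := qq_pos L hL hNpos
  have hfac : ∀ j ∈ Finset.univ.erase (lastIdx N hN),
      0 < Real.cos (qq N L * (z j - c j)) ∧ Real.cos (qq N L * (z j - c j)) ≤ 1 := by
    intro j hj
    have hjne := Finset.ne_of_mem_erase hj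
    have hzj := hz j
    rw [if_neg hjne] at hzj
    have h1 : |z j - c j| < 8*N*L := by
      rw [abs_lt]; exact ⟨by linarith [hzj.1], by linarith [hzj.2]⟩
    have h2 : |qq N L * (z j - c j)| < π/2 := by
      rw [abs_mul, abs_of_pos hq, ← qq_mul_R L hL hNpos]
      exact mul_lt_mul_of_pos_left h1 hq
    rw [abs_lt] at h2
    exact ⟨Real.cos_pos_of_mem_Ioo ⟨by linarith [h2.1], h2.2⟩, Real.cos_le_one _⟩
  constructor
  · exact Finset.prod_pos fun j hj => (hfac j hj).1
  · exact Finset.prod_le_one (fun j hj => le_of_lt (hfac j hj).1) (fun j hj => (hfac j hj).2)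

lemma conC_nonneg_le_one (c : EuclideanSpace ℝ (Fin N)) (L : ℝ) (hL : 0 < L)
    (z : EuclideanSpace ℝ (Fin N)) (hz : z ∈ box hN c (8*N*L) L) :
    0 ≤ conC hN c L z ∧ conC hN c L z ≤ 1 := by
  have hNpos : 0 < N := hN
  have hq := qq_pos L hL hNpos
  have hfac : ∀ j ∈ Finset.univ.erase (lastIdx N hN),
      0 ≤ Real.cos (qq N L * (z j - c j)) ∧ Real.cos (qq N L * (z j - c j)) ≤ 1 := by
    intro j hj
    have hjne := Finset.ne_of_mem_erase hj
    have hzj := hz j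
    rw [if_neg hjne] at hzj
    have h1 : |z j - c j| ≤ 8*N*L := by
      rw [abs_le]; exact ⟨by linarith [hzj.1], by linarith [hzj.2]⟩
    have h2 : |qq N L * (z j - c j)| ≤ π/2 := by
      rw [abs_mul, abs_of_pos hq, ← qq_mul_R L hL hNpos]
      exact mul_le_mul_of_nonneg_left h1 hq.le
    rw [abs_le] at h2
    exact ⟨Real.cos_nonneg_of_mem_Icc ⟨by linarith [h2.1], h2.2⟩, Real.cos_le_one _⟩
  constructor
  · exact Finset.prod_nonneg fun j hj => (hfac j hj).1
  · exact Finset.prod_le_one (fun j hj => (hfac j hj).1) (fun j hj => (hfac j hj).2)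

/-- Main facts about `con`: differentiability and the value of its Laplacian. -/
lemma con_facts (P P' P'' : ℝ → ℝ) (c : EuclideanSpace ℝ (Fin N)) (L : ℝ) (hL : 0 < L)
    (hP : ∀ t ∈ Ioo (0:ℝ) L, HasDerivAt P (P' t) t)
    (hP' : ∀ t ∈ Ioo (0:ℝ) L, HasDerivAt P' (P'' t) t)
    (z : EuclideanSpace ℝ (Fin N)) (hz : z ∈ obox hN c (8*N*L) L) :
    DifferentiableAt ℝ (con hN P c L) z
    ∧ (∀ k : Fin N, DifferentiableAt ℝ
        (fun y => fderiv ℝ (con hN P c L) y (EuclideanSpace.single k (1:ℝ))) z)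
    ∧ lapl (con hN P c L) z
        = P'' (z (lastIdx N hN)) * conC hN c L z
          - ((N:ℝ) - 1) * (qq N L)^2 * con hN P c L z := by
  have hNpos : 0 < N := hN
  set l := lastIdx N hN with hl
  set q := qq N L with hq
  set F : Fin N → ℝ → ℝ := fun i => if i = l then P else fun s => Real.cos (q * (s - c i))
    with hF
  set F' : Fin N → ℝ → ℝ := fun i => if i = l then P'
    else fun s => -(q * Real.sin (q * (s - c i))) with hF'
  set F'' : Fin N → ℝ → ℝ := fun i => if i = l then P''
    else fun s => -(q^2 * Real.cos (q * (s - c i))) with hF''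
  set V : Fin N → Set ℝ := fun i => if i = l then Ioo 0 L else univ with hV
  have hVopen : ∀ i, IsOpen (V i) := by
    intro i
    by_cases h : i = l
    · rw [hV]; simp only [if_pos h]; exact isOpen_Ioo
    · rw [hV]; simp only [if_neg h]; exact isOpen_univ
  have hFd : ∀ i, ∀ t ∈ V i, HasDerivAt (F i) (F' i t) t := by
    intro i t ht
    by_cases h : i = l
    · rw [hV] at ht; rw [hF, hF']; simp only [if_pos h] at ht ⊢; exact hP t ht
    · rw [hF, hF']; simp only [if_neg h]; exact cosf_deriv q (c i) t
  have hFd' : ∀ i, ∀ t ∈ V i, HasDerivAt (F' i) (F'' i t) t := by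
    intro i t ht
    by_cases h : i = l
    · rw [hV] at ht; rw [hF', hF'']; simp only [if_pos h] at ht ⊢; exact hP' t ht
    · rw [hF', hF'']; simp only [if_neg h]; exact cosf_deriv2 q (c i) t
  have hzV : ∀ i, z i ∈ V i := by
    intro i
    by_cases h : i = l
    · rw [hV]; simp only [if_pos h]
      have := hz i
      rw [if_pos h] at this
      exact this
    · rw [hV]; simp only [if_neg h]; trivial
  have hcon : con hN P c L = fun y : EuclideanSpace ℝ (Fin N) => ∏ i, F i (y i) := rfl
  obtain ⟨hd1, hd2, hlapl⟩ := prodFun_facts F F' F'' V hVopen hFd hFd' z hzV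
  rw [hcon]
  refine ⟨hd1, hd2, ?_⟩
  show lapl (fun y => ∏ i, F i (y i)) z
      = P'' (z l) * conC hN c L z - ((N:ℝ) - 1) * q^2 * ∏ i, F i (z i)
  rw [hlapl]
  -- split the sum at l
  rw [← Finset.add_sum_erase Finset.univ _ (Finset.mem_univ l)]
  have hterm1 : F'' l (z l) * ∏ j ∈ Finset.univ.erase l, F j (z j)
      = P'' (z l) * conC hN c L z := by
    rw [hF'']; simp only [if_pos rfl]
    congr 1
    refine Finset.prod_congr rfl fun j hj => ?_
    rw [hF]; simp only [if_neg (show j ≠ l from Finset.ne_of_mem_erase hj)]; rfl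
  have hterm2 : ∀ k ∈ Finset.univ.erase l,
      F'' k (z k) * ∏ j ∈ Finset.univ.erase k, F j (z j)
        = -(q^2) * ∏ i, F i (z i) := by
    intro k hk
    have hkne := Finset.ne_of_mem_erase hk
    have : F'' k (z k) = -(q^2) * F k (z k) := by
      rw [hF'', hF]; simp only [if_neg hkne]; ring
    rw [this, mul_assoc, Finset.mul_prod_erase Finset.univ (fun i => F i (z i))
      (Finset.mem_univ k)]
  have hcard : (((Finset.univ : Finset (Fin N)).card - 1 : ℕ) : ℝ) = (N:ℝ) - 1 := by
    rw [Finset.card_univ, Fintype.card_fin, Nat.cast_sub hN]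
    simp
  rw [Finset.sum_congr rfl hterm2, Finset.sum_const,
    Finset.card_erase_of_mem (Finset.mem_univ l), hterm1, nsmul_eq_mul, hcard]
  ring

end Construction



section Step1

variable {N : ℕ} {hN : 1 ≤ N} {γ : ℝ} {u : EuclideanSpace ℝ (Fin N) → ℝ}

lemma u_nonneg (S : IsClassicalSolution N hN γ u) :
    ∀ x : EuclideanSpace ℝ (Fin N), 0 ≤ x (lastIdx N hN) → 0 ≤ u x := by
  intro x hx
  rcases eq_or_lt_of_le hx with h | h
  · rw [S.bdry x h.symm]
  · exact le_of_lt (S.pos x h)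

lemma cos_factor_cont {i : Fin N} (c : EuclideanSpace ℝ (Fin N)) (L : ℝ) :
    Continuous (fun y : EuclideanSpace ℝ (Fin N) => Real.cos (qq N L * (y i - c i))) := by
  apply Real.continuous_cos.comp
  exact continuous_const.mul (((pr i).continuous).sub continuous_const)

lemma step1_box (hγ0 : 0 < γ) (hγ1 : γ ≤ 1) (S : IsClassicalSolution N hN γ u)
    (c : EuclideanSpace ℝ (Fin N)) (L : ℝ) (hL : 1 ≤ L) :
    ∀ x ∈ box hN c (8*N*L) L,
      con hN (fun s => (s*(L-s))/(4*L)) c L x ≤ u x := by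
  have hNpos : 0 < N := hN
  have hNr : (1:ℝ) ≤ N := by exact_mod_cast hNpos
  have hL0 : 0 < L := by linarith
  set l := lastIdx N hN with hldef
  set P : ℝ → ℝ := fun s => (s*(L-s))/(4*L) with hPdef
  set P' : ℝ → ℝ := fun s => (L - 2*s)/(4*L) with hP'def
  set P'' : ℝ → ℝ := fun _ => -(2/(4*L)) with hP''def
  have hPd : ∀ t ∈ Ioo (0:ℝ) L, HasDerivAt P (P' t) t := fun t _ => par_deriv L t
  have hPd' : ∀ t ∈ Ioo (0:ℝ) L, HasDerivAt P' (P'' t) t := fun t _ => par_deriv2 L t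
  apply comparison hγ0 hγ1 S (isCompact_box c _ L (by positivity) (le_of_lt hL0))
    (isOpen_obox c _ L) (obox_subset_box c _ L) (box_subset_nonneg c _ L)
    (obox_subset_halfSpace c _ L)
  -- continuity of w on the box
  · apply Continuous.continuousOn
    unfold con
    apply continuous_finset_prod
    intro i _
    by_cases h : i = l
    · simp only [if_pos (show i = lastIdx N hN from h)]
      have hPc : Continuous P := by
        rw [hPdef]
        apply Continuous.div_const
        exact continuous_id.mul (continuous_const.sub continuous_id)
      exact hPc.comp (pr i).continuous
    · simp only [if_neg (show ¬ i = lastIdx N hN from h)]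
      exact cos_factor_cont c L
  -- differentiability of w
  · exact fun y hy => (con_facts P P' P'' c L hL0 hPd hPd' y hy).1
  · exact fun k y hy => (con_facts P P' P'' c L hL0 hPd hPd' y hy).2.1 k
  -- the subsolution bounds
  · intro z hz hwz
    obtain ⟨hd1, hd2, hlapl⟩ := con_facts P P' P'' c L hL0 hPd hPd' z hz
    obtain ⟨hPc0, hPc1⟩ := conC_pos_le_one c L hL0 z hz
    have hzl' := hz l
    rw [if_pos rfl] at hzl'
    have hql := qq_le L hL hNpos
    have hq0 := qq_pos L hL0 hNpos
    have hPz0 : 0 < P (z l) := by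
      rw [hPdef]
      exact div_pos (mul_pos hzl'.1 (by linarith [hzl'.2])) (by linarith)
    have hPzle : P (z l) ≤ L/16 := by
      rw [hPdef]
      rw [div_le_div_iff₀ (by linarith) (by norm_num)]
      nlinarith [sq_nonneg (z l - L/2)]
    have hw_eq : con hN P c L z = P (z l) * conC hN c L z := con_eq_mul P c L z
    have hw_pos : 0 < con hN P c L z := by
      rw [hw_eq]; exact mul_pos hPz0 hPc0
    have hw_le : con hN P c L z ≤ L/16 := by
      rw [hw_eq]
      calc P (z l) * conC hN c L z ≤ P (z l) * 1 :=
            mul_le_mul_of_nonneg_left hPc1 (le_of_lt hPz0)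
      _ = P (z l) := mul_one _
      _ ≤ L/16 := hPzle
    have hlapl' : -lapl (con hN P c L) z
        = (2/(4*L)) * conC hN c L z + ((N:ℝ)-1)*(qq N L)^2 * con hN P c L z := by
      rw [hlapl, hP''def]
      ring
    have hq2 : ((N:ℝ)-1)*(qq N L)^2 ≤ 1/(16*L^2) := by
      have h1 : qq N L ^ 2 ≤ (1/(4*N*L))^2 := pow_le_pow_left₀ (le_of_lt hq0) hql 2
      calc ((N:ℝ)-1)*(qq N L)^2 ≤ (N:ℝ) * (1/(4*N*L))^2 :=
            mul_le_mul (by linarith) h1 (sq_nonneg _) (by linarith)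
      _ = 1/(16*N*L^2) := by
            field_simp
            ring
      _ ≤ 1/(16*L^2) := by
            apply one_div_le_one_div_of_le (by positivity)
            nlinarith
    have e1 : (2/(4*L)) * conC hN c L z ≤ 1/(2*L) := by
      calc (2/(4*L)) * conC hN c L z ≤ (2/(4*L)) * 1 :=
            mul_le_mul_of_nonneg_left hPc1 (by positivity)
      _ = 1/(2*L) := by
            field_simp
            ring
    have e2 : ((N:ℝ)-1)*(qq N L)^2 * con hN P c L z ≤ (1/(16*L^2)) * (L/16) :=
      mul_le_mul hq2 hw_le (le_of_lt hw_pos) (by positivity)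
    have e3 : (1/(16*L^2)) * (L/16) = 1/(256*L) := by
      field_simp
      ring
    have e4 : 1/(256*L) ≤ 1/(2*L) :=
      one_div_le_one_div_of_le (by linarith) (by linarith)
    have e5a : 1/(2*L) = (1/2)*(1/L) := by ring
    have e6 : 1/(256*L) = (1/256)*(1/L) := by ring
    have hinv : 0 ≤ 1/L := by positivity
    have hT : -lapl (con hN P c L) z ≤ 1/L := by
      rw [hlapl']
      linarith
    have hTnn : 0 ≤ -lapl (con hN P c L) z := by
      rw [hlapl']
      have hn0 : 0 ≤ ((N:ℝ)-1)*(qq N L)^2 :=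
        mul_nonneg (by linarith) (sq_nonneg _)
      have n1 : 0 ≤ 2/(4*L) * conC hN c L z :=
        mul_nonneg (by positivity) (le_of_lt hPc0)
      have n2 : 0 ≤ ((N:ℝ)-1)*(qq N L)^2 * con hN P c L z :=
        mul_nonneg hn0 (le_of_lt hw_pos)
      linarith
    have hL1 : 1/L ≤ 1 := by
      rw [div_le_one hL0]; exact hL
    constructor
    · linarith
    · calc -lapl (con hN P c L) z * con hN P c L z ≤ (1/L) * (L/16) :=
            mul_le_mul hT hw_le (le_of_lt hw_pos) (by positivity)
      _ = 1/16 := by field_simp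
      _ ≤ 1 := by norm_num
  -- boundary
  · intro z hzB hzO
    have hu0 : 0 ≤ u z := u_nonneg S z (box_subset_nonneg c _ L z hzB)
    have hzO' : ¬ ∀ i : Fin N, z i ∈ (if i = l then Ioo (0:ℝ) L
        else Ioo (c i - 8*N*L) (c i + 8*N*L)) := fun hcontra => hzO hcontra
    push_neg at hzO'
    obtain ⟨i, hi⟩ := hzO'
    have hziB := hzB i
    by_cases h : i = l
    · rw [if_pos h] at hi hziB
      have hzi : z i = 0 ∨ z i = L := by
        by_contra hne
        push_neg at hne
        exact hi ⟨lt_of_le_of_ne hziB.1 (Ne.symm hne.1), lt_of_le_of_ne hziB.2 hne.2⟩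
      have hPzero : P (z l) = 0 := by
        rw [← h]
        rcases hzi with h0 | hL'
        · rw [hPdef]; simp [h0]
        · rw [hPdef]; simp [hL']
      rw [con_eq_mul, hPzero, zero_mul]
      exact hu0
    · rw [if_neg h] at hi hziB
      have hzi : z i = c i - 8*N*L ∨ z i = c i + 8*N*L := by
        by_contra hne
        push_neg at hne
        exact hi ⟨lt_of_le_of_ne hziB.1 (Ne.symm hne.1), lt_of_le_of_ne hziB.2 hne.2⟩
      have hzero : Real.cos (qq N L * (z i - c i)) = 0 := by
        rcases hzi with h0 | h0 <;> rw [h0]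
        · have heq : qq N L * (c i - 8*N*L - c i) = -(π/2) := by
            have hqr := qq_mul_R L hL0 hNpos
            linear_combination -hqr
          rw [heq, Real.cos_neg, Real.cos_pi_div_two]
        · have heq : qq N L * (c i + 8*N*L - c i) = π/2 := by
            have hqr := qq_mul_R L hL0 hNpos
            linear_combination hqr
          rw [heq, Real.cos_pi_div_two]
      have : con hN P c L z = 0 := by
        unfold con
        apply Finset.prod_eq_zero (Finset.mem_univ i)
        rw [if_neg h]
        exact hzero
      rw [this]
      exact hu0

lemma step1 (hγ0 : 0 < γ) (hγ1 : γ ≤ 1) (S : IsClassicalSolution N hN γ u) :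
    ∀ x ∈ halfSpace N hN, x (lastIdx N hN) / 4 ≤ u x := by
  intro x hx
  set l := lastIdx N hN with hldef
  set t := x l with htdef
  have ht0 : 0 < t := hx
  have key : ∀ L : ℝ, 1 ≤ L → t ≤ L → t/4 - t^2/(4*L) ≤ u x := by
    intro L hL1 htL
    have hL0 : 0 < L := by linarith
    have hxbox : x ∈ box hN x (8*N*L) L := by
      intro i
      by_cases h : i = l
      · rw [if_pos h, h]
        exact ⟨le_of_lt ht0, htL⟩
      · rw [if_neg h]
        have hNr : (1:ℝ) ≤ N := by exact_mod_cast hN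
        have h8 : 0 ≤ 8*(N:ℝ)*L := by positivity
        constructor
        · linarith
        · linarith
    have hbox := step1_box hγ0 hγ1 S x L hL1 x hxbox
    have hcon : con hN (fun s => (s*(L-s))/(4*L)) x L x = (t*(L-t))/(4*L) := by
      rw [con_eq_mul]
      have hC : conC hN x L x = 1 := by
        unfold conC
        apply Finset.prod_eq_one
        intro j _
        simp
      rw [hC, mul_one]
    have halg : (t*(L-t))/(4*L) = t/4 - t^2/(4*L) := by
      field_simp
    rw [hcon, halg] at hbox
    exact hbox
  by_contra hcon
  push_neg at hcon
  set ε := (t/4 - u x)/2 with hε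
  have hεpos : 0 < ε := by
    rw [hε]; linarith
  set L := max (max 1 t) (t^2/(4*ε)) with hLdef
  have hL1 : 1 ≤ L := le_trans (le_max_left 1 t) (le_max_left _ _)
  have hLt : t ≤ L := le_trans (le_max_right 1 t) (le_max_left _ _)
  have hLe : t^2/(4*ε) ≤ L := le_max_right _ _
  have hL0 : 0 < L := by linarith
  have hsmall : t^2/(4*L) ≤ ε := by
    rw [div_le_iff₀ (by linarith)]
    have h1 : t^2 ≤ 4*ε*L := by
      have := mul_le_mul_of_nonneg_left hLe (by linarith : (0:ℝ) ≤ 4*ε)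
      calc t^2 = 4*ε*(t^2/(4*ε)) := by field_simp
      _ ≤ 4*ε*L := this
    linarith
  have := key L hL1 hLt
  rw [hε] at hsmall
  linarith

end Step1



section Profile2

/-- `G L s = 1 + log(L+e) - log(s+e)`. -/
noncomputable def Gf (L s : ℝ) : ℝ := 1 + (Real.log (L + Real.exp 1) - Real.log (s + Real.exp 1))

noncomputable def Ff (L s : ℝ) : ℝ := Real.sqrt (Gf L s)

noncomputable def Fd (L s : ℝ) : ℝ := -(1/(s + Real.exp 1)) / (2 * Ff L s)

noncomputable def FdD (L s : ℝ) : ℝ :=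
  (Ff L s + (s + Real.exp 1) * Fd L s) / (2 * ((s + Real.exp 1) * Ff L s)^2)

/-- The step-2 vertical profile. -/
noncomputable def Wf (L s : ℝ) : ℝ := (1/4) * (s * Ff L s)

noncomputable def Wf1 (L s : ℝ) : ℝ := (1/4) * (Ff L s + s * Fd L s)

noncomputable def Wf2 (L s : ℝ) : ℝ := (1/4) * (2 * Fd L s + s * FdD L s)

lemma profile_basic (L : ℝ) (hL : 1 ≤ L) (s : ℝ) (hs : s ∈ Icc (0:ℝ) L) :
    0 < s + Real.exp 1 ∧ 1 ≤ Gf L s ∧ 1 ≤ Ff L s := by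
  have he : 0 < Real.exp 1 := Real.exp_pos 1
  have hA : 0 < s + Real.exp 1 := by linarith [hs.1]
  have hlog : Real.log (s + Real.exp 1) ≤ Real.log (L + Real.exp 1) :=
    Real.log_le_log hA (by linarith [hs.2])
  have hG : 1 ≤ Gf L s := by unfold Gf; linarith
  refine ⟨hA, hG, ?_⟩
  unfold Ff
  have h := Real.sqrt_le_sqrt hG
  rwa [Real.sqrt_one] at h

lemma profile_derivs (L : ℝ) (hL : 1 ≤ L) (s : ℝ) (hs : s ∈ Ioo (0:ℝ) L) :
    HasDerivAt (Wf L) (Wf1 L s) s ∧ HasDerivAt (Wf1 L) (Wf2 L s) s := by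
  have hIcc : s ∈ Icc (0:ℝ) L := ⟨le_of_lt hs.1, le_of_lt hs.2⟩
  obtain ⟨hA, hG, hF1⟩ := profile_basic L hL s hIcc
  have hGpos : 0 < Gf L s := by linarith
  have hFpos : 0 < Ff L s := by linarith
  -- derivative of G
  have hGd : HasDerivAt (Gf L) (-(1/(s + Real.exp 1))) s := by
    have h1 : HasDerivAt (fun t : ℝ => t + Real.exp 1) 1 s := (hasDerivAt_id s).add_const _
    have h2 : HasDerivAt (fun t : ℝ => Real.log (t + Real.exp 1)) (1/(s + Real.exp 1)) s :=
      h1.log (ne_of_gt hA)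
    have h3 := (h2.const_sub (Real.log (L + Real.exp 1))).const_add 1
    exact h3
  -- derivative of F
  have hFd : HasDerivAt (Ff L) (Fd L s) s := by
    have h := hGd.sqrt (ne_of_gt hGpos)
    exact h
  -- derivative of W
  have hWd : HasDerivAt (Wf L) (Wf1 L s) s := by
    have h := ((hasDerivAt_id s).mul hFd).const_mul (1/4 : ℝ)
    refine h.congr_deriv ?_
    unfold Wf1
    simp only [id_eq]
    ring
  -- derivative of Fd : via (−1/2) * ((s+e) * F)⁻¹ on a neighborhood
  have hAF : 0 < (s + Real.exp 1) * Ff L s := mul_pos hA hFpos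
  have hprod : HasDerivAt (fun t : ℝ => (t + Real.exp 1) * Ff L t)
      (Ff L s + (s + Real.exp 1) * Fd L s) s := by
    have h := ((hasDerivAt_id s).add_const (Real.exp 1)).mul hFd
    refine h.congr_deriv ?_
    simp only [id_eq]
    ring
  have hinv : HasDerivAt (fun t : ℝ => (-1/2 : ℝ) * (((t + Real.exp 1) * Ff L t)⁻¹))
      (FdD L s) s := by
    have h := (hprod.inv (ne_of_gt hAF)).const_mul (-1/2 : ℝ)
    refine h.congr_deriv ?_
    unfold FdD
    field_simp
  have hFdd : HasDerivAt (Fd L) (FdD L s) s := by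
    apply hinv.congr_of_eventuallyEq
    have hmem : Ioo (0:ℝ) L ∈ nhds s := isOpen_Ioo.mem_nhds hs
    filter_upwards [hmem] with t ht
    obtain ⟨hA', _, hF1'⟩ := profile_basic L hL t ⟨le_of_lt ht.1, le_of_lt ht.2⟩
    have hFpos' : 0 < Ff L t := by linarith
    unfold Fd
    field_simp
  have hW1d : HasDerivAt (Wf1 L) (Wf2 L s) s := by
    have h := (hFd.add ((hasDerivAt_id s).mul hFdd)).const_mul (1/4 : ℝ)
    refine h.congr_deriv ?_
    unfold Wf2
    simp only [id_eq]
    ring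
  exact ⟨hWd, hW1d⟩

lemma profile_bounds (L : ℝ) (hL : 1 ≤ L) (s : ℝ) (hs : s ∈ Ioo (0:ℝ) L) :
    0 < Wf L s
    ∧ -Wf2 L s ≤ (1/4) * (1/((s + Real.exp 1) * Ff L s))
    ∧ 1 ≤ (s + Real.exp 1) * Ff L s := by
  have hIcc : s ∈ Icc (0:ℝ) L := ⟨le_of_lt hs.1, le_of_lt hs.2⟩
  obtain ⟨hA, hG, hF1⟩ := profile_basic L hL s hIcc
  have hFpos : 0 < Ff L s := by linarith
  have he1 : 1 ≤ Real.exp 1 := by linarith [Real.add_one_le_exp 1, Real.exp_pos 1]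
  have hA1 : 1 ≤ s + Real.exp 1 := by linarith [hs.1]
  have hAF1 : 1 ≤ (s + Real.exp 1) * Ff L s := by nlinarith
  refine ⟨?_, ?_, hAF1⟩
  · unfold Wf
    have := mul_pos hs.1 hFpos
    linarith
  · -- -W2 = (1/4)(−2 Fd − s FdD) ≤ (1/4)(−2 Fd) = (1/4)(1/(A F))
    have hFd_eq : -2 * Fd L s = 1/((s + Real.exp 1) * Ff L s) := by
      unfold Fd
      field_simp
    have hnum : 0 ≤ Ff L s + (s + Real.exp 1) * Fd L s := by
      have : (s + Real.exp 1) * Fd L s = -(1/(2 * Ff L s)) := by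
        unfold Fd
        field_simp
      rw [this]
      have h1 : 1/(2 * Ff L s) ≤ 1/2 := by
        apply one_div_le_one_div_of_le (by norm_num) (by linarith)
      linarith
    have hFdD : 0 ≤ FdD L s := by
      unfold FdD
      apply div_nonneg hnum
      positivity
    have hsFdD : 0 ≤ s * FdD L s := mul_nonneg (le_of_lt hs.1) hFdD
    unfold Wf2
    rw [show -((1/4 : ℝ) * (2 * Fd L s + s * FdD L s))
        = (1/4) * (-2 * Fd L s) - (1/4) * (s * FdD L s) by ring]
    rw [hFd_eq]
    linarith

lemma profile_growth (L : ℝ) (hL : 1 ≤ L) (s : ℝ) (hs : s ∈ Icc (0:ℝ) L) :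
    0 ≤ Wf L s ∧ Wf L s ≤ (1/4) * (L + Real.exp 1) := by
  obtain ⟨hA, hG, hF1⟩ := profile_basic L hL s hs
  have he : 0 < Real.exp 1 := Real.exp_pos 1
  have hFpos : 0 < Ff L s := by linarith
  have hLe : 0 < L + Real.exp 1 := by linarith
  constructor
  · unfold Wf
    have := mul_nonneg hs.1 (le_of_lt hFpos)
    linarith
  · unfold Wf
    have hsq : (s * Ff L s)^2 ≤ (L + Real.exp 1)^2 := by
      have hF2 : (Ff L s)^2 = Gf L s := Real.sq_sqrt (by linarith : (0:ℝ) ≤ Gf L s)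
      have hlogdiv : Real.log (L + Real.exp 1) - Real.log (s + Real.exp 1)
          = Real.log ((L + Real.exp 1)/(s + Real.exp 1)) :=
        (Real.log_div (ne_of_gt hLe) (ne_of_gt hA)).symm
      have hdivpos : 0 < (L + Real.exp 1)/(s + Real.exp 1) := div_pos hLe hA
      have h2 : Gf L s ≤ (L + Real.exp 1)/(s + Real.exp 1) := by
        unfold Gf
        rw [hlogdiv]
        linarith [Real.log_le_sub_one_of_pos hdivpos]
      have h3 : s^2 * Gf L s ≤ s^2 * ((L + Real.exp 1)/(s + Real.exp 1)) :=
        mul_le_mul_of_nonneg_left h2 (sq_nonneg s)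
      have h4 : s^2 * ((L + Real.exp 1)/(s + Real.exp 1)) ≤ s * (L + Real.exp 1) := by
        rw [mul_div_assoc'] at *
        rw [div_le_iff₀ hA]
        nlinarith [mul_nonneg (mul_nonneg hs.1 (le_of_lt hLe)) (le_of_lt he)]
      have h5 : s * (L + Real.exp 1) ≤ (L + Real.exp 1)^2 := by
        nlinarith [hs.2]
      calc (s * Ff L s)^2 = s^2 * (Ff L s)^2 := by ring
      _ = s^2 * Gf L s := by rw [hF2]
      _ ≤ (L + Real.exp 1)^2 := by linarith
    have := (pow_le_pow_iff_left₀ (mul_nonneg hs.1 (le_of_lt hFpos)) (le_of_lt hLe) two_ne_zero).1 hsq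
    linarith

lemma Wf_zero (L : ℝ) : Wf L 0 = 0 := by
  unfold Wf
  ring

lemma Wf_top (L : ℝ) : Wf L L = L/4 := by
  unfold Wf Ff Gf
  rw [sub_self, add_zero, Real.sqrt_one]
  ring

end Profile2



section Step2

variable {N : ℕ} {hN : 1 ≤ N} {γ : ℝ} {u : EuclideanSpace ℝ (Fin N) → ℝ}

set_option maxHeartbeats 2000000 in
lemma step2_box (hγ0 : 0 < γ) (hγ1 : γ ≤ 1) (S : IsClassicalSolution N hN γ u)
    (c : EuclideanSpace ℝ (Fin N)) (L : ℝ) (hL : 1 ≤ L) :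
    ∀ x ∈ box hN c (8*N*L) L, con hN (Wf L) c L x ≤ u x := by
  have hNpos : 0 < N := hN
  have hNr : (1:ℝ) ≤ N := by exact_mod_cast hNpos
  have hL0 : 0 < L := by linarith
  have he : 0 < Real.exp 1 := Real.exp_pos 1
  have he3 : Real.exp 1 ≤ 3 := by linarith [Real.exp_one_lt_d9]
  set l := lastIdx N hN with hldef
  have hPd : ∀ t ∈ Ioo (0:ℝ) L, HasDerivAt (Wf L) (Wf1 L t) t :=
    fun t ht => (profile_derivs L hL t ht).1
  have hPd' : ∀ t ∈ Ioo (0:ℝ) L, HasDerivAt (Wf1 L) (Wf2 L t) t :=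
    fun t ht => (profile_derivs L hL t ht).2
  apply comparison hγ0 hγ1 S (isCompact_box c _ L (by positivity) (le_of_lt hL0))
    (isOpen_obox c _ L) (obox_subset_box c _ L) (box_subset_nonneg c _ L)
    (obox_subset_halfSpace c _ L)
  -- continuity on the box
  · unfold con
    apply continuousOn_finset_prod
    intro i _
    by_cases h : i = l
    · simp only [if_pos (show i = lastIdx N hN from h)]
      have hWcont : ContinuousOn (Wf L) (Icc 0 L) := by
        intro t ht
        have hA : 0 < t + Real.exp 1 := by linarith [ht.1]
        apply ContinuousAt.continuousWithinAt
        unfold Wf Ff Gf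
        apply ContinuousAt.mul continuousAt_const
        apply ContinuousAt.mul continuousAt_id
        apply Real.continuous_sqrt.continuousAt.comp
        apply ContinuousAt.add continuousAt_const
        apply ContinuousAt.sub continuousAt_const
        apply ContinuousAt.log
        · exact (continuous_id.add continuous_const).continuousAt
        · exact ne_of_gt hA
      apply ContinuousOn.comp hWcont ((pr i).continuous.continuousOn)
      intro y hy
      have hyi := hy i
      rw [if_pos h] at hyi
      exact hyi
    · simp only [if_neg (show ¬ i = lastIdx N hN from h)]
      exact (cos_factor_cont c L).continuousOn
  -- differentiability
  · exact fun y hy => (con_facts (Wf L) (Wf1 L) (Wf2 L) c L hL0 hPd hPd' y hy).1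
  · exact fun k y hy => (con_facts (Wf L) (Wf1 L) (Wf2 L) c L hL0 hPd hPd' y hy).2.1 k
  -- subsolution bounds
  · intro z hz hwz
    obtain ⟨hd1, hd2, hlapl⟩ := con_facts (Wf L) (Wf1 L) (Wf2 L) c L hL0 hPd hPd' z hz
    obtain ⟨hPc0, hPc1⟩ := conC_pos_le_one c L hL0 z hz
    have hzl : z l ∈ Ioo (0:ℝ) L := by
      have := hz l
      rw [if_pos rfl] at this
      exact this
    obtain ⟨hWpos, hW2le, hAF1⟩ := profile_bounds L hL (z l) hzl
    obtain ⟨hW0, hWle⟩ := profile_growth L hL (z l) ⟨le_of_lt hzl.1, le_of_lt hzl.2⟩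
    have hA : 0 < z l + Real.exp 1 := by linarith [hzl.1]
    have hF1 : 1 ≤ Ff L (z l) := (profile_basic L hL (z l) ⟨le_of_lt hzl.1, le_of_lt hzl.2⟩).2.2
    have hFpos : 0 < Ff L (z l) := by linarith
    have hql := qq_le L hL hNpos
    have hq0 := qq_pos L hL0 hNpos
    have hw_eq : con hN (Wf L) c L z = Wf L (z l) * conC hN c L z := con_eq_mul (Wf L) c L z
    have hw_pos : 0 < con hN (Wf L) c L z := by
      rw [hw_eq]; exact mul_pos hWpos hPc0
    have hWleL : Wf L (z l) ≤ L := by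
      have : (1/4 : ℝ) * (L + Real.exp 1) ≤ L := by linarith
      linarith
    have hw_leL : con hN (Wf L) c L z ≤ L := by
      rw [hw_eq]
      calc Wf L (z l) * conC hN c L z ≤ Wf L (z l) * 1 :=
            mul_le_mul_of_nonneg_left hPc1 hW0
      _ = Wf L (z l) := mul_one _
      _ ≤ L := hWleL
    have hq2 : ((N:ℝ)-1)*(qq N L)^2 ≤ 1/(16*L^2) := by
      have h1 : qq N L ^ 2 ≤ (1/(4*N*L))^2 := pow_le_pow_left₀ (le_of_lt hq0) hql 2
      calc ((N:ℝ)-1)*(qq N L)^2 ≤ (N:ℝ) * (1/(4*N*L))^2 :=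
            mul_le_mul (by linarith) h1 (sq_nonneg _) (by linarith)
      _ = 1/(16*N*L^2) := by
            field_simp
            ring
      _ ≤ 1/(16*L^2) := by
            apply one_div_le_one_div_of_le (by positivity)
            nlinarith
    set M := (1/4 : ℝ) * (1/((z l + Real.exp 1) * Ff L (z l))) with hMdef
    have hMnn : 0 ≤ M := by
      rw [hMdef]; positivity
    have hM14 : M ≤ 1/4 := by
      rw [hMdef]
      have h1 : 1/((z l + Real.exp 1) * Ff L (z l)) ≤ 1 := by
        rw [div_le_one (by linarith)]
        exact hAF1
      linarith
    have hlapl' : -lapl (con hN (Wf L) c L) z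
        = (-Wf2 L (z l)) * conC hN c L z + ((N:ℝ)-1)*(qq N L)^2 * con hN (Wf L) c L z := by
      rw [hlapl]
      ring
    have bound1 : (-Wf2 L (z l)) * conC hN c L z ≤ M := by
      calc (-Wf2 L (z l)) * conC hN c L z ≤ M * conC hN c L z :=
            mul_le_mul_of_nonneg_right hW2le (le_of_lt hPc0)
      _ ≤ M * 1 := mul_le_mul_of_nonneg_left hPc1 hMnn
      _ = M := mul_one _
    have bound2 : ((N:ℝ)-1)*(qq N L)^2 * con hN (Wf L) c L z ≤ 1/16 := by
      calc ((N:ℝ)-1)*(qq N L)^2 * con hN (Wf L) c L z ≤ (1/(16*L^2)) * L :=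
            mul_le_mul hq2 hw_leL (le_of_lt hw_pos) (by positivity)
      _ = 1/(16*L) := by
            field_simp
      _ ≤ 1/16 := one_div_le_one_div_of_le (by norm_num) (by linarith)
    constructor
    · rw [hlapl']
      linarith
    · -- (-lapl w) * w ≤ 1
      have hle : -lapl (con hN (Wf L) c L) z
          ≤ M * conC hN c L z + ((N:ℝ)-1)*(qq N L)^2 * con hN (Wf L) c L z := by
        rw [hlapl']
        have := mul_le_mul_of_nonneg_right hW2le (le_of_lt hPc0)
        linarith
      have hmul := mul_le_mul_of_nonneg_right hle (le_of_lt hw_pos)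
      have hterm1 : (M * conC hN c L z) * con hN (Wf L) c L z ≤ 1/16 := by
        rw [hw_eq]
        have hMW : M * Wf L (z l) = (1/16) * (z l/(z l + Real.exp 1)) := by
          rw [hMdef]
          unfold Wf
          field_simp
          ring
        have hPc2 : conC hN c L z * conC hN c L z ≤ 1 := by
          nlinarith
        have hzA : z l/(z l + Real.exp 1) ≤ 1 := by
          rw [div_le_one hA]
          linarith
        calc (M * conC hN c L z) * (Wf L (z l) * conC hN c L z)
            = (M * Wf L (z l)) * (conC hN c L z * conC hN c L z) := by ring
        _ ≤ (M * Wf L (z l)) * 1 := by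
              apply mul_le_mul_of_nonneg_left hPc2
              rw [hMW]
              exact mul_nonneg (by norm_num) (div_nonneg (le_of_lt hzl.1) (le_of_lt hA))
        _ = (1/16) * (z l/(z l + Real.exp 1)) := by rw [mul_one, hMW]
        _ ≤ 1/16 := by nlinarith
      have hterm2 : (((N:ℝ)-1)*(qq N L)^2 * con hN (Wf L) c L z) * con hN (Wf L) c L z
          ≤ 1/16 := by
        calc (((N:ℝ)-1)*(qq N L)^2 * con hN (Wf L) c L z) * con hN (Wf L) c L z
            = ((N:ℝ)-1)*(qq N L)^2 * (con hN (Wf L) c L z * con hN (Wf L) c L z) := by ring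
        _ ≤ (1/(16*L^2)) * (L * L) := by
              apply mul_le_mul hq2
              · exact mul_le_mul hw_leL hw_leL (le_of_lt hw_pos) (by linarith)
              · nlinarith
              · positivity
        _ = 1/16 := by
              field_simp
      have : (M * conC hN c L z + ((N:ℝ)-1)*(qq N L)^2 * con hN (Wf L) c L z)
          * con hN (Wf L) c L z
          = (M * conC hN c L z) * con hN (Wf L) c L z
            + (((N:ℝ)-1)*(qq N L)^2 * con hN (Wf L) c L z) * con hN (Wf L) c L z := by
        ring
      rw [this] at hmul
      linarith
  -- boundary
  · intro z hzB hzO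
    have hu0 : 0 ≤ u z := u_nonneg S z (box_subset_nonneg c _ L z hzB)
    have hzO' : ¬ ∀ i : Fin N, z i ∈ (if i = l then Ioo (0:ℝ) L
        else Ioo (c i - 8*N*L) (c i + 8*N*L)) := fun hcontra => hzO hcontra
    push_neg at hzO'
    obtain ⟨i, hi⟩ := hzO'
    have hziB := hzB i
    by_cases h : i = l
    · rw [if_pos h] at hi hziB
      have hzi : z i = 0 ∨ z i = L := by
        by_contra hne
        push_neg at hne
        exact hi ⟨lt_of_le_of_ne hziB.1 (Ne.symm hne.1), lt_of_le_of_ne hziB.2 hne.2⟩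
      rcases hzi with h0 | hLtop
      · have hPzero : Wf L (z l) = 0 := by
          rw [← h, h0, Wf_zero]
        rw [con_eq_mul, hPzero, zero_mul]
        exact hu0
      · -- top face : use step 1
        have hzl : z l = L := by rw [← h]; exact hLtop
        have hzH : z ∈ halfSpace N hN := by
          show 0 < z (lastIdx N hN)
          rw [← hldef, hzl]
          linarith
        have hstep1 := step1 hγ0 hγ1 S z hzH
        rw [← hldef, hzl] at hstep1
        obtain ⟨hPc0, hPc1⟩ := conC_nonneg_le_one c L hL0 z hzB
        rw [con_eq_mul, hzl, Wf_top]
        calc L/4 * conC hN c L z ≤ L/4 * 1 :=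
              mul_le_mul_of_nonneg_left hPc1 (by linarith)
        _ = L/4 := mul_one _
        _ ≤ u z := hstep1
    · rw [if_neg h] at hi hziB
      have hzi : z i = c i - 8*N*L ∨ z i = c i + 8*N*L := by
        by_contra hne
        push_neg at hne
        exact hi ⟨lt_of_le_of_ne hziB.1 (Ne.symm hne.1), lt_of_le_of_ne hziB.2 hne.2⟩
      have hzero : Real.cos (qq N L * (z i - c i)) = 0 := by
        rcases hzi with h0 | h0 <;> rw [h0]
        · have heq : qq N L * (c i - 8*N*L - c i) = -(π/2) := by
            have hqr := qq_mul_R L hL0 hNpos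
            linear_combination -hqr
          rw [heq, Real.cos_neg, Real.cos_pi_div_two]
        · have heq : qq N L * (c i + 8*N*L - c i) = π/2 := by
            have hqr := qq_mul_R L hL0 hNpos
            linear_combination hqr
          rw [heq, Real.cos_pi_div_two]
      have hzeroc : con hN (Wf L) c L z = 0 := by
        unfold con
        apply Finset.prod_eq_zero (Finset.mem_univ i)
        rw [if_neg h]
        exact hzero
      rw [hzeroc]
      exact hu0

end Step2


/-- for `0 < γ ≤ 1` there is no classical solution of `(P_γ)`
on the half space. -/
theorem no_solution_small_gamma (N : ℕ) (hN : 1 ≤ N) (γ : ℝ) (hγ0 : 0 < γ)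
    (hγ1 : γ ≤ 1) :
    ¬ ∃ u : EuclideanSpace ℝ (Fin N) → ℝ, IsClassicalSolution N hN γ u := by
  rintro ⟨u, S⟩
  set l := lastIdx N hN with hldef
  set x₀ : EuclideanSpace ℝ (Fin N) := EuclideanSpace.single l (1:ℝ) with hx₀def
  have hx₀l : x₀ l = 1 := by
    rw [hx₀def, EuclideanSpace.single_apply, if_pos rfl]
  have hx₀ : x₀ ∈ halfSpace N hN := by
    show 0 < x₀ l
    rw [hx₀l]
    norm_num
  have hu0 : 0 < u x₀ := S.pos x₀ hx₀
  have he : 0 < Real.exp 1 := Real.exp_pos 1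
  set L := max 1 ((1 + Real.exp 1) * Real.exp ((4 * u x₀)^2)) with hLdef
  have hL1 : 1 ≤ L := le_max_left _ _
  have hL0 : 0 < L := by linarith
  have hNr : (1:ℝ) ≤ N := by exact_mod_cast hN
  have hx₀box : x₀ ∈ box hN x₀ (8*N*L) L := by
    intro i
    by_cases h : i = l
    · rw [if_pos h, h, hx₀l]
      exact ⟨by norm_num, hL1⟩
    · rw [if_neg h]
      have h8 : 0 ≤ 8*(N:ℝ)*L := by positivity
      exact ⟨by linarith, by linarith⟩
  have hbox := step2_box hγ0 hγ1 S x₀ L hL1 x₀ hx₀box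
  have hcon : con hN (Wf L) x₀ L x₀ = Wf L 1 := by
    rw [con_eq_mul]
    have hC : conC hN x₀ L x₀ = 1 := Finset.prod_eq_one fun j _ => by simp
    rw [hC, mul_one, hx₀l]
  have hD : (4 * u x₀)^2 ≤ Real.log (L + Real.exp 1) - Real.log (1 + Real.exp 1) := by
    have hexp : (1 + Real.exp 1) * Real.exp ((4*u x₀)^2) ≤ L := le_max_right _ _
    have h1 : Real.log ((1 + Real.exp 1) * Real.exp ((4*u x₀)^2))
        ≤ Real.log (L + Real.exp 1) :=
      Real.log_le_log (by positivity) (by linarith)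
    rw [Real.log_mul (by positivity) (by positivity), Real.log_exp] at h1
    linarith
  have hWf1 : u x₀ < Wf L 1 := by
    unfold Wf Ff Gf
    have h2 : (4 * u x₀)^2
        < 1 + (Real.log (L + Real.exp 1) - Real.log (1 + Real.exp 1)) := by linarith
    have h3 := Real.sqrt_lt_sqrt (sq_nonneg (4 * u x₀)) h2
    rw [Real.sqrt_sq (by positivity)] at h3
    linarith
  rw [hcon] at hbox
  linarith
end

section
/- Let γ > 1. Then there exists a function v ∈ C²((0,∞)) ∩ C([0,∞)) with v > 0 on (0,∞) such that -v''(t) = v(t)^{-γ} for all t > 0, v(0) = 0, and lim_{t→∞} v'(t) = 1. -/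
open Real Set Filter
open MeasureTheory intervalIntegral

/-- for `γ > 1` there exists `v ∈ C²((0,∞)) ∩ C([0,∞))`, positive
on `(0,∞)`, with `-v'' = v^{-γ}` on `(0,∞)`, `v(0) = 0` and `v'(t) → 1` as
`t → ∞`. -/
theorem exists_normalized_ode_solution (γ : ℝ) (hγ : 1 < γ) :
    ∃ v : ℝ → ℝ,
      ContDiffOn ℝ 2 v (Ioi (0 : ℝ)) ∧
      ContinuousOn v (Ici (0 : ℝ)) ∧
      (∀ t > (0 : ℝ), 0 < v t) ∧
      (∀ t > (0 : ℝ), -(deriv (deriv v) t) = (v t) ^ (-γ)) ∧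
      v 0 = 0 ∧
      Tendsto (deriv v) atTop (nhds 1) := by
  have hγ0 : (0:ℝ) < γ - 1 := by linarith
  set c : ℝ := 2 / (γ - 1) with hc_def
  have hc : 0 < c := by positivity
  have hc2 : c * (γ - 1) = 2 := by rw [hc_def]; field_simp
  set g : ℝ → ℝ := fun w => (Real.sqrt (1 + c * |w| ^ (1 - γ)))⁻¹ with hg_def
  have habs : ∀ w : ℝ, (0:ℝ) ≤ |w| ^ (1 - γ) := fun w => Real.rpow_nonneg (abs_nonneg w) _
  have hh1 : ∀ w : ℝ, (1:ℝ) ≤ 1 + c * |w| ^ (1 - γ) := fun w =>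
    le_add_of_nonneg_right (mul_nonneg hc.le (habs w))
  have hsq1 : ∀ w : ℝ, 1 ≤ Real.sqrt (1 + c * |w| ^ (1 - γ)) := fun w =>
    Real.one_le_sqrt.mpr (hh1 w)
  have hgpos : ∀ w : ℝ, 0 < g w := fun w =>
    inv_pos.mpr (lt_of_lt_of_le one_pos (hsq1 w))
  have hgle : ∀ w : ℝ, g w ≤ 1 := fun w => inv_le_one_of_one_le₀ (hsq1 w)
  -- measurability of g
  have hrmeas : Measurable (fun w : ℝ => |w| ^ (1 - γ)) := by
    have hEq : (fun w : ℝ => |w| ^ (1 - γ)) =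
        fun w => if w = 0 then 0 else Real.exp (Real.log |w| * (1 - γ)) := by
      funext w
      by_cases h : w = 0
      · rw [if_pos h, h, abs_zero, Real.zero_rpow (by linarith)]
      · rw [if_neg h, Real.rpow_def_of_pos (abs_pos.mpr h)]
    rw [hEq]
    exact Measurable.ite (measurableSet_singleton 0) measurable_const
      (((Real.measurable_log.comp measurable_abs).mul measurable_const).exp)
  have hgmeas : Measurable g :=
    ((measurable_const.add (measurable_const.mul hrmeas)).sqrt).inv
  -- continuity of g away from 0
  have hgcont : ∀ w : ℝ, w ≠ 0 → ContinuousAt g w := by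
    intro w hw
    have h1 : ContinuousAt (fun w : ℝ => |w| ^ (1 - γ)) w :=
      (Real.continuousAt_rpow_const |w| (1 - γ)
        (Or.inl (abs_ne_zero.mpr hw))).comp continuous_abs.continuousAt
    have h2 : ContinuousAt (fun w : ℝ => Real.sqrt (1 + c * |w| ^ (1 - γ))) w :=
      Real.continuous_sqrt.continuousAt.comp
        ((continuousAt_const.add (continuousAt_const.mul h1)))
    exact h2.inv₀ (by positivity)
  -- interval integrability of g
  have hgint : ∀ a b : ℝ, IntervalIntegrable g volume a b := by
    intro a b
    rw [intervalIntegrable_iff]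
    refine Measure.integrableOn_of_bounded (M := 1) (measure_Ioc_lt_top).ne
      hgmeas.aestronglyMeasurable (ae_of_all _ fun w => ?_)
    rw [Real.norm_eq_abs, abs_of_pos (hgpos w)]
    exact hgle w
  set F : ℝ → ℝ := fun v => ∫ w in (0:ℝ)..v, g w with hF_def
  have hFd : ∀ u : ℝ, u ≠ 0 → HasDerivAt F (g u) u := fun u hu =>
    intervalIntegral.integral_hasDerivAt_right (hgint 0 u)
      ⟨univ, univ_mem, hgmeas.aestronglyMeasurable⟩ (hgcont u hu)
  have hF0 : F 0 = 0 := intervalIntegral.integral_same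
  have hFcont : Continuous F := by
    rw [continuous_iff_continuousAt]
    intro u
    by_cases hu : u = 0
    · subst hu
      have hb : ∀ t : ℝ, ‖F t‖ ≤ |t| := by
        intro t
        have := intervalIntegral.norm_integral_le_of_norm_le_const (C := 1)
          (f := g) (a := (0:ℝ)) (b := t) (fun x _ => by
            rw [Real.norm_eq_abs, abs_of_pos (hgpos x)]; exact hgle x)
        simpa using this
      have : Tendsto F (nhds 0) (nhds 0) :=
        squeeze_zero_norm hb ((continuous_abs.tendsto' 0 0 abs_zero))
      rwa [ContinuousAt, hF0]
    · exact (hFd u hu).continuousAt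
  have hFmono : StrictMono F := by
    intro a b hab
    have hsum := intervalIntegral.integral_add_adjacent_intervals (hgint 0 a) (hgint a b)
    have hpos : 0 < ∫ w in a..b, g w :=
      intervalIntegral.intervalIntegral_pos_of_pos_on (hgint a b)
        (fun x _ => hgpos x) hab
    show F a < F b
    rw [hF_def]
    dsimp only
    rw [← hsum]
    linarith
  -- lower bound for g far from 0
  set m : ℝ := (Real.sqrt (1 + c))⁻¹ with hm_def
  have hmpos : 0 < m := inv_pos.mpr (Real.sqrt_pos.mpr (by linarith))
  have hglb : ∀ w : ℝ, 1 ≤ |w| → m ≤ g w := by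
    intro w hw
    have h1 : |w| ^ (1 - γ) ≤ 1 :=
      Real.rpow_le_one_of_one_le_of_nonpos hw (by linarith)
    have h2 : Real.sqrt (1 + c * |w| ^ (1 - γ)) ≤ Real.sqrt (1 + c) := by
      apply Real.sqrt_le_sqrt
      nlinarith
    exact inv_anti₀ (lt_of_lt_of_le one_pos (hsq1 w)) h2
  have htop : Tendsto F atTop atTop := by
    apply tendsto_atTop_mono' atTop
      (f₁ := fun u => F 1 + m * (u - 1))
    · filter_upwards [eventually_ge_atTop (1:ℝ)] with u hu
      have hsum := intervalIntegral.integral_add_adjacent_intervals (hgint 0 1) (hgint 1 u)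
      have hlow : m * (u - 1) ≤ ∫ w in (1:ℝ)..u, g w := by
        have := intervalIntegral.integral_mono_on (f := fun _ => m) (g := g) hu
          intervalIntegrable_const (hgint 1 u)
          (fun x hx => hglb x (by rw [abs_of_pos (by linarith [hx.1])]; exact hx.1))
        simpa [mul_comm] using this
      show F 1 + m * (u - 1) ≤ F u
      rw [hF_def]; dsimp only
      rw [← hsum]
      linarith
    · exact tendsto_atTop_add_const_left _ _
        (Tendsto.const_mul_atTop hmpos (tendsto_atTop_add_const_right _ _ tendsto_id))
  have hbot : Tendsto F atBot atBot := by
    apply tendsto_atBot_mono' atBot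
      (f₁ := fun u => F (-1) + m * (u + 1))
    · filter_upwards [eventually_le_atBot (-1:ℝ)] with u hu
      have hsum := intervalIntegral.integral_add_adjacent_intervals (hgint 0 u) (hgint u (-1))
      have hlow : m * (-1 - u) ≤ ∫ w in u..(-1:ℝ), g w := by
        have := intervalIntegral.integral_mono_on (f := fun _ => m) (g := g) (by linarith : u ≤ -1)
          intervalIntegrable_const (hgint u (-1))
          (fun x hx => hglb x (by rw [abs_of_neg (by linarith [hx.2])]; linarith [hx.2]))
        simpa [mul_comm] using this
      show F u ≤ F (-1) + m * (u + 1)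
      have : F u + ∫ w in u..(-1:ℝ), g w = F (-1) := hsum
      nlinarith
    · exact tendsto_atBot_add_const_left _ _
        (Tendsto.const_mul_atBot hmpos (tendsto_atBot_add_const_right _ _ tendsto_id))
  have hFsurj : Function.Surjective F := hFcont.surjective htop hbot
  set e : ℝ ≃o ℝ := StrictMono.orderIsoOfSurjective F hFmono hFsurj with he_def
  set v : ℝ → ℝ := fun t => e.symm t with hv_def
  have hFv : ∀ t : ℝ, F (v t) = t := fun t =>
    StrictMono.orderIsoOfSurjective_self_symm_apply F hFmono hFsurj t
  have hvF : ∀ u : ℝ, v (F u) = u := fun u =>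
    StrictMono.orderIsoOfSurjective_symm_apply_self F hFmono hFsurj u
  have hv0 : v 0 = 0 := by have := hvF 0; rwa [hF0] at this
  have hvcont : Continuous v := e.symm.continuous
  have hvmono : StrictMono v := e.symm.strictMono
  have hvpos : ∀ t : ℝ, 0 < t → 0 < v t := fun t ht => hv0 ▸ hvmono ht
  have hvd : ∀ t : ℝ, 0 < t → HasDerivAt v ((g (v t))⁻¹) t := fun t ht =>
    HasDerivAt.of_local_left_inverse hvcont.continuousAt
      (hFd (v t) (ne_of_gt (hvpos t ht))) (ne_of_gt (hgpos _))
      (Eventually.of_forall hFv)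
  set ψ : ℝ → ℝ := fun t => Real.sqrt (1 + c * (v t) ^ (1 - γ)) with hψ_def
  have hginv : ∀ t : ℝ, 0 < t → (g (v t))⁻¹ = ψ t := by
    intro t ht
    rw [hg_def, hψ_def]
    dsimp only
    rw [inv_inv, abs_of_pos (hvpos t ht)]
  have hψpos : ∀ t : ℝ, 0 < t → 0 < 1 + c * (v t) ^ (1 - γ) := by
    intro t ht
    have := Real.rpow_nonneg (hvpos t ht).le (1 - γ)
    nlinarith
  have hψd : ∀ t : ℝ, 0 < t → HasDerivAt ψ (-(v t) ^ (-γ)) t := by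
    intro t ht
    have hvt := hvpos t ht
    have hd := hvd t ht
    rw [hginv t ht] at hd
    have hinner : HasDerivAt (fun s => 1 + c * (v s) ^ (1 - γ))
        (c * (ψ t * (1 - γ) * (v t) ^ (1 - γ - 1))) t :=
      ((hd.rpow_const (Or.inl (ne_of_gt hvt))).const_mul c).const_add 1
    have hs := hinner.sqrt (ne_of_gt (hψpos t ht))
    have hψt : Real.sqrt (1 + c * (v t) ^ (1 - γ)) = ψ t := rfl
    rw [hψt] at hs
    have hψtpos : 0 < ψ t := Real.sqrt_pos.mpr (hψpos t ht)
    convert hs using 1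
    rw [show (1 - γ - 1 : ℝ) = -γ by ring]
    field_simp
    have hinv : (-1 + γ) * (-1 + γ)⁻¹ = 1 := mul_inv_cancel₀ (by linarith)
    linear_combination 2 * hinv
  have hdv : ∀ t : ℝ, 0 < t → deriv v t = ψ t := by
    intro t ht
    rw [(hvd t ht).deriv, hginv t ht]
  have hEqnhds : ∀ t : ℝ, 0 < t → deriv v =ᶠ[nhds t] ψ := by
    intro t ht
    filter_upwards [Ioi_mem_nhds ht] with s hs
    exact hdv s hs
  have hdd : ∀ t : ℝ, 0 < t → deriv (deriv v) t = -(v t) ^ (-γ) := by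
    intro t ht
    rw [(hEqnhds t ht).deriv_eq]
    exact (hψd t ht).deriv
  refine ⟨v, ?_, hvcont.continuousOn, fun t ht => hvpos t ht, ?_, hv0, ?_⟩
  · -- ContDiffOn ℝ 2 v (Ioi 0)
    rw [show (2 : WithTop ℕ∞) = 1 + 1 by norm_num,
      contDiffOn_succ_iff_deriv_of_isOpen isOpen_Ioi]
    refine ⟨fun t ht => (hvd t ht).differentiableAt.differentiableWithinAt,
      by simp, ?_⟩
    rw [show (1 : WithTop ℕ∞) = 0 + 1 by norm_num,
      contDiffOn_succ_iff_deriv_of_isOpen isOpen_Ioi]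
    refine ⟨?_, by simp, ?_⟩
    · intro t ht
      exact ((hψd t ht).differentiableAt.congr_of_eventuallyEq
        (hEqnhds t ht)).differentiableWithinAt
    · rw [contDiffOn_zero]
      apply ContinuousOn.congr (f := fun t => -(v t) ^ (-γ))
        (g := deriv (deriv v))
      · intro t ht
        apply ContinuousWithinAt.neg
        exact ((Real.continuousAt_rpow_const (v t) (-γ)
          (Or.inl (ne_of_gt (hvpos t ht)))).comp
          hvcont.continuousAt).continuousWithinAt
      · intro t ht
        exact hdd t ht
  · intro t ht
    rw [hdd t ht, neg_neg]
  · -- Tendsto (deriv v) atTop (nhds 1)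
    have hvtop : Tendsto v atTop atTop :=
      tendsto_atTop_atTop_of_monotone hvmono.monotone (fun b => ⟨F b, (hvF b).ge⟩)
    have h1 : Tendsto (fun t => (v t) ^ (1 - γ)) atTop (nhds 0) := by
      have := (tendsto_rpow_neg_atTop hγ0).comp hvtop
      simpa [Function.comp_def, show -(γ-1) = 1 - γ by ring] using this
    have h2 : Tendsto ψ atTop (nhds 1) := by
      have h3 : Tendsto (fun t => 1 + c * (v t) ^ (1 - γ)) atTop (nhds 1) := by
        have := ((tendsto_const_nhds (x := c)).mul h1).const_add (1:ℝ)
        simpa using this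
      have := (Real.continuous_sqrt.tendsto 1).comp h3
      simpa [Function.comp_def, Real.sqrt_one] using this
    apply h2.congr'
    filter_upwards [eventually_gt_atTop (0:ℝ)] with t ht
    exact (hdv t ht).symm
end

section
/- Let γ > 1 and suppose v₁, v₂ ∈ C²((0,∞)) ∩ C([0,∞)) are both positive on (0,∞) and satisfy -vᵢ''(t) = vᵢ(t)^{-γ} for all t > 0, vᵢ(0) = 0, and lim_{t→∞} vᵢ'(t) = 1, for i = 1, 2. Then v₁ = v₂ on [0,∞). -/
open Real Set Filter

/-- Energy identity: any solution satisfies the first-order ODE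
`v' = sqrt (1 + (2/(γ-1)) v^(1-γ))` on `(0,∞)`. -/
private lemma first_order_ode (γ : ℝ) (hγ : 1 < γ) (v : ℝ → ℝ)
    (h2 : ContDiffOn ℝ 2 v (Ioi (0 : ℝ)))
    (hpos : ∀ t > (0 : ℝ), 0 < v t)
    (hode : ∀ t > (0 : ℝ), -(deriv (deriv v) t) = (v t) ^ (-γ))
    (hlim : Tendsto (deriv v) atTop (nhds 1)) :
    ∀ t > (0 : ℝ), deriv v t = Real.sqrt (1 + 2 / (γ - 1) * (v t) ^ (1 - γ)) := by
  have hγ1 : γ - 1 ≠ 0 := by linarith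
  have hd1 : ∀ t > (0 : ℝ), HasDerivAt v (deriv v t) t := fun t ht =>
    ((h2.differentiableOn (by norm_num)).differentiableAt (isOpen_Ioi.mem_nhds ht)).hasDerivAt
  have hC1 : ContDiffOn ℝ 1 (deriv v) (Ioi (0 : ℝ)) :=
    h2.deriv_of_isOpen isOpen_Ioi (by norm_num)
  have hd2 : ∀ t > (0 : ℝ), HasDerivAt (deriv v) (deriv (deriv v) t) t := fun t ht =>
    ((hC1.differentiableOn one_ne_zero).differentiableAt (isOpen_Ioi.mem_nhds ht)).hasDerivAt
  have hneg : ∀ t > (0 : ℝ), deriv (deriv v) t < 0 := by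
    intro t ht
    have h := hode t ht
    have : (0 : ℝ) < (v t) ^ (-γ) := Real.rpow_pos_of_pos (hpos t ht) _
    linarith
  have hanti : StrictAntiOn (deriv v) (Ioi (0 : ℝ)) := by
    apply strictAntiOn_of_deriv_neg (convex_Ioi 0) hC1.continuousOn
    intro x hx
    rw [interior_Ioi] at hx
    exact hneg x hx
  have hgt1 : ∀ t > (0 : ℝ), 1 < deriv v t := by
    intro t ht
    have h1 : (1 : ℝ) ≤ deriv v (t + 1) := by
      apply le_of_tendsto hlim
      filter_upwards [eventually_gt_atTop (t + 1)] with s hs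
      exact (hanti (by simp; linarith) (by simp; linarith) hs).le
    have h2' : deriv v (t + 1) < deriv v t :=
      hanti (mem_Ioi.mpr ht) (by simp; linarith) (lt_add_one t)
    linarith
  have hvtop : Tendsto v atTop atTop := by
    have hmono : StrictMonoOn (fun x => v x - x) (Ici (1 : ℝ)) := by
      apply strictMonoOn_of_deriv_pos (convex_Ici 1)
      · refine ContinuousOn.sub ?_ continuousOn_id
        exact h2.continuousOn.mono fun x hx => mem_Ioi.mpr (lt_of_lt_of_le one_pos (mem_Ici.mp hx))
      · intro x hx
        rw [interior_Ici] at hx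
        have hx0 : (0 : ℝ) < x := lt_trans one_pos hx
        have hder : HasDerivAt (fun x => v x - x) (deriv v x - 1) x :=
          (hd1 x hx0).sub (hasDerivAt_id x)
        rw [hder.deriv]
        linarith [hgt1 x hx0]
    refine tendsto_atTop_mono' atTop ?_ (tendsto_atTop_add_const_right _ (v 1 - 1) tendsto_id)
    filter_upwards [eventually_ge_atTop (1 : ℝ)] with x hx
    have := hmono.monotoneOn (mem_Ici.mpr le_rfl) (mem_Ici.mpr hx) hx
    simp only [id] at this ⊢
    linarith
  set E : ℝ → ℝ := fun t => (deriv v t) ^ 2 - 2 / (γ - 1) * (v t) ^ (1 - γ) with hEdef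
  have hE' : ∀ t > (0 : ℝ), HasDerivAt E 0 t := by
    intro t ht
    have h1 : HasDerivAt (fun s => (deriv v s) ^ 2)
        (2 * deriv v t * deriv (deriv v) t) t := by
      have := (hd2 t ht).fun_pow 2
      simpa using this
    have h2' : HasDerivAt (fun s => (v s) ^ (1 - γ))
        (deriv v t * (1 - γ) * (v t) ^ (-γ)) t := by
      have h := (hd1 t ht).rpow_const (p := 1 - γ) (Or.inl (hpos t ht).ne')
      have he : (1 - γ) - 1 = -γ := by ring
      rwa [he] at h
    have hcomb := h1.fun_sub (h2'.const_mul (2 / (γ - 1)))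
    have hdd : deriv (deriv v) t = -((v t) ^ (-γ)) := by
      have := hode t ht; linarith
    convert hcomb using 1
    case e'_4 => rfl
    case e'_5 => rfl
    rw [hdd]
    field_simp
    ring
  have hEconst : ∀ s t : ℝ, 0 < s → s ≤ t → E t = E s := by
    intro s t hs hst
    have := constant_of_has_deriv_right_zero (f := E) (a := s) (b := t)
      (fun x hx => (hE' x (lt_of_lt_of_le hs hx.1)).continuousAt.continuousWithinAt)
      (fun x hx => (hE' x (lt_of_lt_of_le hs hx.1)).hasDerivWithinAt)
    exact this t (right_mem_Icc.mpr hst)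
  have hE1 : ∀ t > (0 : ℝ), E t = 1 := by
    have hev : ∀ᶠ t in atTop, E t = E 1 := by
      filter_upwards [eventually_ge_atTop (1 : ℝ)] with t ht
      exact hEconst 1 t one_pos ht
    have hl1 : Tendsto E atTop (nhds (E 1)) :=
      tendsto_const_nhds.congr' (hev.mono fun t ht => ht.symm)
    have hl2 : Tendsto E atTop (nhds (1 ^ 2 - 2 / (γ - 1) * 0)) := by
      apply Tendsto.sub
      · exact hlim.pow 2
      · apply Tendsto.const_mul
        have h := (tendsto_rpow_neg_atTop (by linarith : (0 : ℝ) < γ - 1)).comp hvtop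
        have he : (fun t => (v t) ^ (1 - γ)) = fun t => (v t) ^ (-(γ - 1)) := by
          funext t; congr 1; ring
        rw [he]
        exact h
    have hE1eq : E 1 = 1 := by
      have := tendsto_nhds_unique hl1 hl2
      simpa using this
    intro t ht
    rcases le_total t 1 with h | h
    · rw [← hE1eq]; exact (hEconst t 1 ht h).symm
    · rw [← hE1eq]; exact hEconst 1 t one_pos h
  intro t ht
  have hsq : (deriv v t) ^ 2 = 1 + 2 / (γ - 1) * (v t) ^ (1 - γ) := by
    have := hE1 t ht
    simp only [hEdef] at this
    linarith
  rw [← hsq, Real.sqrt_sq (by linarith [hgt1 t ht])]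

/-- Comparison: if two solutions of the first-order ODE vanish at `0`,
one is below the other. -/
private lemma le_aux (γ : ℝ) (hγ : 1 < γ) (v₁ v₂ : ℝ → ℝ)
    (h₁c : ContinuousOn v₁ (Ici (0 : ℝ))) (h₁0 : v₁ 0 = 0)
    (h₂c : ContinuousOn v₂ (Ici (0 : ℝ))) (h₂0 : v₂ 0 = 0)
    (h₂pos : ∀ t > (0 : ℝ), 0 < v₂ t)
    (h₁d : ∀ t > (0 : ℝ), HasDerivAt v₁ (deriv v₁ t) t)
    (h₂d : ∀ t > (0 : ℝ), HasDerivAt v₂ (deriv v₂ t) t)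
    (hfo₁ : ∀ t > (0 : ℝ), deriv v₁ t = Real.sqrt (1 + 2 / (γ - 1) * (v₁ t) ^ (1 - γ)))
    (hfo₂ : ∀ t > (0 : ℝ), deriv v₂ t = Real.sqrt (1 + 2 / (γ - 1) * (v₂ t) ^ (1 - γ))) :
    ∀ t ∈ Ici (0 : ℝ), v₁ t ≤ v₂ t := by
  by_contra hcon
  push_neg at hcon
  obtain ⟨t₀, ht₀0, ht₀⟩ := hcon
  have ht₀pos : 0 < t₀ := by
    rcases eq_or_lt_of_le (mem_Ici.mp ht₀0) with h | h
    · exfalso; rw [← h, h₁0, h₂0] at ht₀; exact lt_irrefl 0 ht₀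
    · exact h
  set S : Set ℝ := Icc 0 t₀ ∩ (fun t => v₁ t - v₂ t) ⁻¹' Iic 0 with hSdef
  have hIccIci : Icc (0 : ℝ) t₀ ⊆ Ici 0 := fun x hx => hx.1
  have hScl : IsClosed S :=
    ContinuousOn.preimage_isClosed_of_isClosed
      (((h₁c.sub h₂c)).mono hIccIci) isClosed_Icc isClosed_Iic
  have hScomp : IsCompact S := isCompact_Icc.of_isClosed_subset hScl inter_subset_left
  have hSne : S.Nonempty := ⟨0, ⟨left_mem_Icc.mpr ht₀pos.le, by simp [h₁0, h₂0]⟩⟩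
  set s := sSup S with hsdef
  have hsS : s ∈ S := hScomp.sSup_mem hSne
  have hs0 : 0 ≤ s := hsS.1.1
  have hst₀ : s ≤ t₀ := hsS.1.2
  have hws : v₁ s - v₂ s ≤ 0 := hsS.2
  have hbdd : BddAbove S := ⟨t₀, fun x hx => hx.1.2⟩
  have hgt : ∀ x, s < x → x ≤ t₀ → v₂ x < v₁ x := by
    intro x h1 h2
    by_contra hle
    push_neg at hle
    have hxS : x ∈ S := ⟨⟨le_trans hs0 h1.le, h2⟩, by simpa using sub_nonpos.mpr hle⟩
    have := le_csSup hbdd hxS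
    linarith
  have hw : AntitoneOn (fun t => v₁ t - v₂ t) (Icc s t₀) := by
    apply antitoneOn_of_deriv_nonpos (convex_Icc s t₀)
    · exact (h₁c.sub h₂c).mono fun x hx => le_trans hs0 hx.1
    · intro x hx
      rw [interior_Icc] at hx
      have hx0 : (0 : ℝ) < x := lt_of_le_of_lt hs0 hx.1
      exact (((h₁d x hx0).sub (h₂d x hx0)).differentiableAt).differentiableWithinAt
    · intro x hx
      rw [interior_Icc] at hx
      have hx0 : (0 : ℝ) < x := lt_of_le_of_lt hs0 hx.1
      have hder : deriv (fun t => v₁ t - v₂ t) x = deriv v₁ x - deriv v₂ x :=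
        ((h₁d x hx0).sub (h₂d x hx0)).deriv
      rw [hder, hfo₁ x hx0, hfo₂ x hx0]
      have hvlt : v₂ x < v₁ x := hgt x hx.1 hx.2.le
      have h2x : 0 < v₂ x := h₂pos x hx0
      have hrp : (v₁ x) ^ (1 - γ) ≤ (v₂ x) ^ (1 - γ) :=
        Real.rpow_le_rpow_of_nonpos h2x hvlt.le (by linarith)
      have hc : 0 < 2 / (γ - 1) := div_pos two_pos (by linarith)
      have hle' : 1 + 2 / (γ - 1) * (v₁ x) ^ (1 - γ) ≤ 1 + 2 / (γ - 1) * (v₂ x) ^ (1 - γ) := by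
        nlinarith
      have := Real.sqrt_le_sqrt hle'
      linarith
  have hfinal := hw (left_mem_Icc.mpr hst₀) (right_mem_Icc.mpr hst₀) hst₀
  simp only at hfinal
  linarith

/-- uniqueness, for `γ > 1`, of the positive solution of
`-v'' = v^{-γ}` on `(0,∞)` with `v(0) = 0` and `v'(t) → 1` as `t → ∞`. -/
theorem normalized_ode_solution_unique (γ : ℝ) (hγ : 1 < γ) (v₁ v₂ : ℝ → ℝ)
    (h₁2 : ContDiffOn ℝ 2 v₁ (Ioi (0 : ℝ)))
    (h₁c : ContinuousOn v₁ (Ici (0 : ℝ)))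
    (h₁pos : ∀ t > (0 : ℝ), 0 < v₁ t)
    (h₁ode : ∀ t > (0 : ℝ), -(deriv (deriv v₁) t) = (v₁ t) ^ (-γ))
    (h₁0 : v₁ 0 = 0)
    (h₁lim : Tendsto (deriv v₁) atTop (nhds 1))
    (h₂2 : ContDiffOn ℝ 2 v₂ (Ioi (0 : ℝ)))
    (h₂c : ContinuousOn v₂ (Ici (0 : ℝ)))
    (h₂pos : ∀ t > (0 : ℝ), 0 < v₂ t)
    (h₂ode : ∀ t > (0 : ℝ), -(deriv (deriv v₂) t) = (v₂ t) ^ (-γ))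
    (h₂0 : v₂ 0 = 0)
    (h₂lim : Tendsto (deriv v₂) atTop (nhds 1)) :
    ∀ t ∈ Ici (0 : ℝ), v₁ t = v₂ t := by
  have h₁d : ∀ t > (0 : ℝ), HasDerivAt v₁ (deriv v₁ t) t := fun t ht =>
    ((h₁2.differentiableOn (by norm_num)).differentiableAt (isOpen_Ioi.mem_nhds ht)).hasDerivAt
  have h₂d : ∀ t > (0 : ℝ), HasDerivAt v₂ (deriv v₂ t) t := fun t ht =>
    ((h₂2.differentiableOn (by norm_num)).differentiableAt (isOpen_Ioi.mem_nhds ht)).hasDerivAt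
  have hfo₁ := first_order_ode γ hγ v₁ h₁2 h₁pos h₁ode h₁lim
  have hfo₂ := first_order_ode γ hγ v₂ h₂2 h₂pos h₂ode h₂lim
  have hle₁ := le_aux γ hγ v₁ v₂ h₁c h₁0 h₂c h₂0 h₂pos h₁d h₂d hfo₁ hfo₂
  have hle₂ := le_aux γ hγ v₂ v₁ h₂c h₂0 h₁c h₁0 h₁pos h₂d h₁d hfo₂ hfo₁
  intro t ht
  exact le_antisymm (hle₁ t ht) (hle₂ t ht)
end

section
/- Let N ≥ 1 and γ > 1, and let u be a classical solution of problem (P_γ) on the half space ℝ^N_+. Then there exists a constant C = C(γ) > 0 such that u(x) ≥ C · x_N^{2/(γ+1)} for all x ∈ ℝ^N_+. -/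
open Real Set

open Filter Topology Finset

/-- Second derivative test at a local max. -/
lemma second_deriv_test {h : ℝ → ℝ} {D : ℝ}
    (hd : ∀ᶠ s in 𝓝 (0:ℝ), DifferentiableAt ℝ h s)
    (hD : HasDerivAt (deriv h) D 0) (hmax : IsLocalMax h 0) : D ≤ 0 := by
  by_contra hpos
  push_neg at hpos
  have h0 : deriv h 0 = 0 := hmax.deriv_eq_zero
  have hslope : Tendsto (slope (deriv h) 0) (𝓝[≠] (0:ℝ)) (𝓝 D) :=
    hasDerivAt_iff_tendsto_slope.mp hD
  have hev : ∀ᶠ s in 𝓝[≠] (0:ℝ), 0 < slope (deriv h) 0 s :=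
    hslope.eventually (eventually_gt_nhds hpos)
  have hev' : ∀ᶠ s in 𝓝[>] (0:ℝ), 0 < deriv h s := by
    have h1 : ∀ᶠ s in 𝓝[>] (0:ℝ), 0 < slope (deriv h) 0 s :=
      nhdsWithin_mono _ (fun s hs => ne_of_gt hs) hev
    filter_upwards [h1, self_mem_nhdsWithin] with s hs hs0
    have heq : slope (deriv h) 0 s = deriv h s / s := by
      rw [slope_def_field, h0]
      rw [div_eq_div_iff (sub_ne_zero.mpr (ne_of_gt hs0)) (ne_of_gt hs0)]
      ring
    rw [heq] at hs
    rcases div_pos_iff.mp hs with ⟨ha, _⟩ | ⟨_, hb⟩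
    · exact ha
    · exact absurd hs0 (not_lt.mpr hb.le)
  obtain ⟨δ₂, hδ₂, hsub⟩ := mem_nhdsGT_iff_exists_Ioo_subset.mp hev'
  have hδ₂0 : (0:ℝ) < δ₂ := hδ₂
  obtain ⟨δ₁, hδ₁, H1⟩ := Metric.eventually_nhds_iff.mp (hd.and hmax)
  set b : ℝ := min δ₁ δ₂ / 2 with hb
  have hb0 : 0 < b := by positivity
  have hbδ₁ : b < δ₁ := (half_lt_self (lt_min hδ₁ hδ₂0)).trans_le (min_le_left _ _)
  have hbδ₂ : b < δ₂ := (half_lt_self (lt_min hδ₁ hδ₂0)).trans_le (min_le_right _ _)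
  have hmono : StrictMonoOn h (Icc 0 b) := by
    apply strictMonoOn_of_deriv_pos (convex_Icc 0 b)
    · intro s hs
      have : dist s 0 < δ₁ := by
        rw [Real.dist_eq, sub_zero, abs_of_nonneg hs.1]
        exact lt_of_le_of_lt hs.2 hbδ₁
      exact ((H1 this).1).continuousAt.continuousWithinAt
    · intro s hs
      rw [interior_Icc] at hs
      exact hsub ⟨hs.1, lt_trans hs.2 hbδ₂⟩
  have hlt : h 0 < h b := hmono ⟨le_refl 0, hb0.le⟩ ⟨hb0.le, le_refl b⟩ hb0
  have hle : h b ≤ h 0 :=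
    (H1 (by rw [Real.dist_eq, sub_zero, abs_of_pos hb0]; exact hbδ₁)).2
  exact absurd hlt (not_lt.mpr hle)

/-- Key comparison lemma: a classical solution dominates the explicit
subsolution `c x_N^α - δ x_N - ε |x'|²` for suitable constants. -/
lemma key_comparison {N : ℕ} (hN : 1 ≤ N) {γ : ℝ} (hγ : 1 < γ)
    {u : EuclideanSpace ℝ (Fin N) → ℝ}
    (sol : IsClassicalSolution N hN γ u) {α c δ ε : ℝ}
    (hαdef : α = 2 / (γ + 1)) (hc : 0 < c) (hδ : 0 < δ) (hε : 0 < ε)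
    (hcid : c ^ (-γ) = 2 * α * (1 - α) * c)
    (hεsmall : ε ≤ c ^ (-γ) * ((c / δ) ^ ((1:ℝ) / (1 - α))) ^ (α - 2) / (4 * N))
    {x₀ : EuclideanSpace ℝ (Fin N)} (hx₀ : x₀ ∈ halfSpace N hN) :
    c * (x₀ (lastIdx N hN)) ^ α - δ * (x₀ (lastIdx N hN))
      - ε * ∑ j ∈ Finset.univ.erase (lastIdx N hN), (x₀ j) ^ 2 ≤ u x₀ := by
  have hγ0 : (0:ℝ) < γ + 1 := by linarith
  have hα0 : 0 < α := by rw [hαdef]; positivity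
  have hα1 : α < 1 := by rw [hαdef, div_lt_one hγ0]; linarith
  have h1α : (0:ℝ) < 1 - α := by linarith
  set l := lastIdx N hN with hldef
  set v : EuclideanSpace ℝ (Fin N) → ℝ :=
    fun y => c * (y l) ^ α - δ * (y l) - ε * ∑ j ∈ Finset.univ.erase l, (y j) ^ 2 with hvdef
  show v x₀ ≤ u x₀
  by_contra hlt
  push_neg at hlt
  set R : ℝ := (c / δ) ^ ((1:ℝ) / (1 - α)) with hRdef
  have hR : 0 < R := Real.rpow_pos_of_pos (by positivity) _
  have hcont_l : Continuous fun y : EuclideanSpace ℝ (Fin N) => y l :=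
    (EuclideanSpace.proj (𝕜 := ℝ) l).continuous
  have hopen : IsOpen (halfSpace N hN) := by
    have : halfSpace N hN = (fun y : EuclideanSpace ℝ (Fin N) => y l) ⁻¹' (Ioi 0) := rfl
    rw [this]
    exact isOpen_Ioi.preimage hcont_l
  have hvcont : Continuous v := by
    have hrpow : Continuous fun s : ℝ => s ^ α := Real.continuous_rpow_const hα0.le
    refine Continuous.sub (Continuous.sub (continuous_const.mul (hrpow.comp hcont_l))
      (continuous_const.mul hcont_l)) (continuous_const.mul ?_)
    exact continuous_finset_sum _ fun j _ =>
      ((EuclideanSpace.proj (𝕜 := ℝ) j).continuous).pow 2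
  set S : Set (EuclideanSpace ℝ (Fin N)) := {y | y ∈ halfSpace N hN ∧ u y < v y} with hSdef
  have hScont : ∀ y ∈ halfSpace N hN, ContinuousAt u y := fun y hy =>
    sol.smooth.continuousOn.continuousAt (hopen.mem_nhds hy)
  have hSopen : IsOpen S := by
    rw [isOpen_iff_mem_nhds]
    intro y hy
    have h1 : ∀ᶠ z in 𝓝 y, z ∈ halfSpace N hN := hopen.mem_nhds hy.1
    have h2 : ∀ᶠ z in 𝓝 y, u z < v z := by
      have hsub : ContinuousAt (fun z => v z - u z) y :=
        hvcont.continuousAt.sub (hScont y hy.1)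
      have hpos : 0 < v y - u y := sub_pos.mpr hy.2
      have := hsub.eventually_ne (ne_of_gt hpos)
      have h3 := hsub (Ioi_mem_nhds hpos)
      filter_upwards [h3] with z hz
      exact sub_pos.mp hz
    filter_upwards [h1, h2] with z hz1 hz2
    exact ⟨hz1, hz2⟩
  -- bounds on points of S
  have hZR : ∀ y ∈ S, y l < R ∧ ∑ j ∈ Finset.univ.erase l, (y j) ^ 2 ≤ c * R ^ α / ε := by
    intro y hy
    have hZ : 0 < y l := hy.1
    have huy : 0 < u y := sol.pos y hy.1
    have hsum0 : 0 ≤ ∑ j ∈ Finset.univ.erase l, (y j) ^ 2 :=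
      Finset.sum_nonneg fun j _ => sq_nonneg _
    have hv0 : 0 < v y := lt_trans huy hy.2
    have hεs : 0 ≤ ε * ∑ j ∈ Finset.univ.erase l, (y j) ^ 2 := by positivity
    have h1 : δ * y l < c * (y l) ^ α := by
      have := hv0
      rw [hvdef] at this
      simp only at this
      linarith
    have hyR : y l < R := by
      have h2 : (y l) ^ ((1:ℝ) - α) < c / δ := by
        rw [Real.rpow_sub hZ, Real.rpow_one]
        rw [div_lt_div_iff₀ (Real.rpow_pos_of_pos hZ α) hδ]
        linarith [h1]
      have h3 : ((y l) ^ ((1:ℝ) - α)) ^ ((1:ℝ)/(1-α)) < R := by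
        rw [hRdef]
        exact Real.rpow_lt_rpow (Real.rpow_nonneg hZ.le _) h2 (by positivity)
      have h4 : ((y l) ^ ((1:ℝ) - α)) ^ ((1:ℝ)/(1-α)) = y l := by
        rw [← Real.rpow_mul hZ.le, mul_one_div, div_self (ne_of_gt h1α), Real.rpow_one]
      rwa [h4] at h3
    refine ⟨hyR, ?_⟩
    have h4 : ε * ∑ j ∈ Finset.univ.erase l, (y j) ^ 2 < c * (y l) ^ α := by
      have := hv0
      rw [hvdef] at this
      simp only at this
      nlinarith
    have h5 : c * (y l) ^ α ≤ c * R ^ α :=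
      mul_le_mul_of_nonneg_left (Real.rpow_le_rpow hZ.le hyR.le hα0.le) hc.le
    rw [le_div_iff₀ hε]
    calc (∑ j ∈ Finset.univ.erase l, (y j) ^ 2) * ε
        = ε * ∑ j ∈ Finset.univ.erase l, (y j) ^ 2 := by ring
      _ ≤ c * R ^ α := le_of_lt (lt_of_lt_of_le h4 h5)
  have hSbdd : Bornology.IsBounded S := by
    rw [isBounded_iff_forall_norm_le]
    refine ⟨Real.sqrt (R ^ 2 + c * R ^ α / ε), ?_⟩
    intro y hy
    obtain ⟨hyR, hysum⟩ := hZR y hy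
    have hZ : 0 < y l := hy.1
    rw [EuclideanSpace.norm_eq]
    apply Real.sqrt_le_sqrt
    have hnorm : ∀ j, ‖y j‖ ^ 2 = (y j) ^ 2 := fun j => by
      rw [Real.norm_eq_abs, sq_abs]
    calc ∑ j, ‖y j‖ ^ 2 = ∑ j, (y j) ^ 2 := by
          exact Finset.sum_congr rfl fun j _ => hnorm j
      _ = (y l) ^ 2 + ∑ j ∈ Finset.univ.erase l, (y j) ^ 2 :=
          (Finset.add_sum_erase _ _ (Finset.mem_univ l)).symm
      _ ≤ R ^ 2 + c * R ^ α / ε := by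
          have h1 : (y l) ^ 2 ≤ R ^ 2 := by nlinarith
          linarith
  set w : EuclideanSpace ℝ (Fin N) → ℝ := fun y => v y - u y with hwdef
  have hKsub : closure S ⊆ closure (halfSpace N hN) := closure_mono fun y hy => hy.1
  have hwcont : ContinuousOn w (closure S) :=
    (hvcont.continuousOn).sub (sol.cont.mono hKsub)
  have hx₀S : x₀ ∈ S := ⟨hx₀, hlt⟩
  obtain ⟨z, hzK, hzmax⟩ :=
    (hSbdd.isCompact_closure).exists_isMaxOn ⟨x₀, subset_closure hx₀S⟩ hwcont
  have hwx₀ : 0 < w x₀ := sub_pos.mpr hlt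
  have hzS : z ∈ S := by
    by_contra hzS
    have hz0 : 0 ≤ z l := by
      have hcl : closure (halfSpace N hN) ⊆ {y : EuclideanSpace ℝ (Fin N) | 0 ≤ y l} :=
        closure_minimal (fun y hy => show (0:ℝ) ≤ y l from le_of_lt hy) (isClosed_le continuous_const hcont_l)
      exact hcl (hKsub hzK)
    have hwz : w z ≤ 0 := by
      rcases eq_or_lt_of_le hz0 with heq | hpos
      · have hu0 : u z = 0 := sol.bdry z heq.symm
        have hrp : (z l) ^ α = 0 := by rw [← heq]; exact Real.zero_rpow (ne_of_gt hα0)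
        have hsum0 : 0 ≤ ∑ j ∈ Finset.univ.erase l, (z j) ^ 2 :=
          Finset.sum_nonneg fun j _ => sq_nonneg _
        have : v z = - ε * ∑ j ∈ Finset.univ.erase l, (z j) ^ 2 := by
          rw [hvdef]; simp only; rw [hrp, ← heq]; ring
        rw [hwdef]; simp only; rw [hu0, this]; nlinarith
      · have h1 : ¬ (u z < v z) := fun h => hzS ⟨hpos, h⟩
        rw [hwdef]; simp only; linarith [not_lt.mp h1]
    have hle : w x₀ ≤ w z := hzmax (subset_closure hx₀S)
    linarith
  have hz1 : z ∈ halfSpace N hN := hzS.1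
  have hZ : 0 < z l := hz1
  have hzR : z l < R := (hZR z hzS).1
  have huz : 0 < u z := sol.pos z hz1
  have huv : u z < v z := hzS.2
  have hvz : v z ≤ c * (z l) ^ α := by
    have hsum0 : 0 ≤ ∑ j ∈ Finset.univ.erase l, (z j) ^ 2 :=
      Finset.sum_nonneg fun j _ => sq_nonneg _
    rw [hvdef]; simp only; nlinarith
  have hzloc : IsLocalMax w z :=
    hzmax.isLocalMax (mem_of_superset (hSopen.mem_nhds hzS) subset_closure)
  -- per-coordinate second derivative inequality at the max point z
  have key_i : ∀ i : Fin N,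
      (if i = l then c * α * (α - 1) * (z l) ^ (α - 2) else -2 * ε) ≤
        fderiv ℝ (fun y => fderiv ℝ u y (EuclideanSpace.single i (1:ℝ))) z
          (EuclideanSpace.single i (1:ℝ)) := by
    intro i
    set e : EuclideanSpace ℝ (Fin N) := EuclideanSpace.single i (1:ℝ) with hedef
    set d : Fin N → ℝ := fun j => if j = i then 1 else 0 with hddef
    set A : ℝ → EuclideanSpace ℝ (Fin N) := fun s => z + s • e with hA2def
    have hA0 : A 0 = z := by rw [hA2def]; simp
    have hAj : ∀ (s : ℝ) (j : Fin N), A s j = z j + s * d j := by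
      intro s j
      rw [hA2def, hddef]
      simp [hedef, EuclideanSpace.single_apply]
    have hAderiv : ∀ s : ℝ, HasDerivAt A e s := by
      intro s
      have h1 : HasDerivAt (fun s' : ℝ => s' • e) ((1:ℝ) • e) s := (hasDerivAt_id s).smul_const e
      have h2 := h1.const_add z
      rw [one_smul] at h2
      exact h2
    have hmem : ∀ᶠ s in 𝓝 (0:ℝ), A s ∈ halfSpace N hN := by
      have hAc : ContinuousAt A 0 := (hAderiv 0).continuousAt
      have h3 := hAc.preimage_mem_nhds (by rw [hA0]; exact hopen.mem_nhds hz1)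
      filter_upwards [h3] with s hs using hs
    have hudiff : ∀ y ∈ halfSpace N hN, DifferentiableAt ℝ u y := fun y hy =>
      (sol.smooth.contDiffAt (hopen.mem_nhds hy)).differentiableAt (by norm_num)
    set f₁ : EuclideanSpace ℝ (Fin N) → ℝ := fun y => fderiv ℝ u y e with hf₁def
    have hq' : ∀ᶠ s in 𝓝 (0:ℝ), HasDerivAt (fun s' => u (A s')) (f₁ (A s)) s := by
      filter_upwards [hmem] with s hs
      exact HasFDerivAt.comp_hasDerivAt s ((hudiff _ hs).hasFDerivAt) (hAderiv s)
    have hqd : (deriv fun s' => u (A s')) =ᶠ[𝓝 (0:ℝ)] fun s => f₁ (A s) := by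
      filter_upwards [hq'] with s hs using hs.deriv
    have hu2 : ContDiffAt ℝ 2 u z := sol.smooth.contDiffAt (hopen.mem_nhds hz1)
    have hD1 : ContDiffAt ℝ 1 (fderiv ℝ u) z := hu2.fderiv_right (by norm_num)
    have hf₁diff : DifferentiableAt ℝ f₁ z := by
      have h2 := ((ContinuousLinearMap.apply ℝ ℝ e).differentiableAt).comp z
        (hD1.differentiableAt one_ne_zero)
      exact h2
    set Qi : ℝ := fderiv ℝ f₁ z e with hQidef
    have hQ : HasDerivAt (fun s => f₁ (A s)) Qi 0 := by
      have h := hf₁diff.hasFDerivAt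
      rw [show z = A 0 from hA0.symm] at h
      have h2 := HasFDerivAt.comp_hasDerivAt 0 h (hAderiv 0)
      simp [hA0] at h2
      exact h2
    have hq2 : HasDerivAt (deriv fun s' => u (A s')) Qi 0 := hQ.congr_of_eventuallyEq hqd
    -- explicit part
    set p : ℝ → ℝ := fun s =>
      c * (z l + s * d l) ^ α - δ * (z l + s * d l)
        - ε * ∑ j ∈ Finset.univ.erase l, (z j + s * d j) ^ 2 with hpdef
    have hpv : ∀ s : ℝ, v (A s) = p s := by
      intro s
      simp only [hvdef, hpdef, hAj]
    have hd01 : ∀ j, d j = 0 ∨ d j = 1 := fun j => by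
      rw [hddef]; by_cases h : j = i <;> simp [h]
    have hbase : ∀ s : ℝ, |s| < z l → 0 < z l + s * d l := by
      intro s hs
      rcases hd01 l with h | h <;> rw [h]
      · simpa using hZ
      · have h1 := neg_abs_le s; linarith
    have haffd : ∀ (j : Fin N) (s : ℝ), HasDerivAt (fun s' : ℝ => z j + s' * d j) (d j) s := by
      intro j s
      simpa using ((hasDerivAt_id s).mul_const (d j)).const_add (z j)
    have hp1 : ∀ s : ℝ, |s| < z l → HasDerivAt p
        (c * (α * (z l + s * d l) ^ (α - 1) * d l) - δ * d l
          - ε * ∑ j ∈ Finset.univ.erase l, 2 * (z j + s * d j) * d j) s := by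
      intro s hs
      have h1 : HasDerivAt (fun s' => (z l + s' * d l) ^ α)
          (α * (z l + s * d l) ^ (α - 1) * d l) s := by
        have h2 := (Real.hasDerivAt_rpow_const (x := z l + s * d l) (p := α)
          (Or.inl (ne_of_gt (hbase s hs)))).comp s (haffd l s)
        exact h2
      have h3 : HasDerivAt (fun s' => ∑ j ∈ Finset.univ.erase l, (z j + s' * d j) ^ 2)
          (∑ j ∈ Finset.univ.erase l, 2 * (z j + s * d j) * d j) s := by
        apply HasDerivAt.fun_sum
        intro j _
        have h4 := (haffd j s).pow 2
        norm_num at h4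
        exact h4
      exact ((h1.const_mul c).sub ((haffd l s).const_mul δ)).sub (h3.const_mul ε)
    have hball : ∀ᶠ s in 𝓝 (0:ℝ), |s| < z l := by
      have h1 : Metric.ball (0:ℝ) (z l) ∈ 𝓝 (0:ℝ) := Metric.ball_mem_nhds 0 hZ
      filter_upwards [h1] with s hs
      simpa [Real.dist_eq] using hs
    have hpdiff : ∀ᶠ s in 𝓝 (0:ℝ), DifferentiableAt ℝ p s := by
      filter_upwards [hball] with s hs using (hp1 s hs).differentiableAt
    have hpderiv : deriv p =ᶠ[𝓝 (0:ℝ)] fun s =>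
        c * (α * (z l + s * d l) ^ (α - 1) * d l) - δ * d l
          - ε * ∑ j ∈ Finset.univ.erase l, 2 * (z j + s * d j) * d j := by
      filter_upwards [hball] with s hs using (hp1 s hs).deriv
    have hp2 : HasDerivAt (deriv p)
        (if i = l then c * α * (α - 1) * (z l) ^ (α - 2) else -2 * ε) 0 := by
      have h1 : HasDerivAt (fun s : ℝ => (z l + s * d l) ^ (α - 1))
          ((α - 1) * (z l + 0 * d l) ^ (α - 1 - 1) * d l) 0 := by
        have h2 := (Real.hasDerivAt_rpow_const (x := z l + 0 * d l) (p := α - 1)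
          (Or.inl (by simpa using ne_of_gt hZ))).comp 0 (haffd l 0)
        exact h2
      have hterm1 := ((h1.const_mul α).mul_const (d l)).const_mul c
      have hterm2 : HasDerivAt (fun _ : ℝ => δ * d l) 0 0 := hasDerivAt_const 0 _
      have hterm3 : HasDerivAt
          (fun s : ℝ => ∑ j ∈ Finset.univ.erase l, 2 * (z j + s * d j) * d j)
          (∑ j ∈ Finset.univ.erase l, 2 * d j * d j) 0 := by
        apply HasDerivAt.fun_sum
        intro j _
        exact ((haffd j 0).const_mul 2).mul_const (d j)
      have hraw := (hterm1.sub hterm2).sub (hterm3.const_mul ε)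
      have hraw2 := hraw.congr_of_eventuallyEq hpderiv
      refine HasDerivAt.congr_deriv hraw2 ?_
      by_cases hil : i = l
      · have hdl : d l = 1 := by rw [hddef]; simp [hil]
        have hsum0 : ∑ j ∈ Finset.univ.erase l, 2 * d j * d j = 0 := by
          apply Finset.sum_eq_zero
          intro j hj
          have hji : j ≠ i := by
            rw [hil]; exact (Finset.mem_erase.mp hj).1
          have : d j = 0 := by rw [hddef]; simp [hji]
          rw [this]; ring
        rw [if_pos hil, hsum0, hdl]
        have harith : α - 1 - 1 = α - 2 := by ring
        rw [harith]; ring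
      · have hdl : d l = 0 := by
          rw [hddef]; exact if_neg (fun h => hil h.symm)
        have h7 : ∀ j ∈ Finset.univ.erase l, 2 * d j * d j = if j = i then 2 else 0 := by
          intro j _
          rw [hddef]; by_cases h : j = i <;> simp [h]
        have hsum2 : ∑ j ∈ Finset.univ.erase l, 2 * d j * d j = 2 := by
          rw [Finset.sum_congr rfl h7, Finset.sum_ite_eq' (Finset.univ.erase l) i fun _ => 2]
          simp [Finset.mem_erase, hil]
        rw [if_neg hil, hdl, hsum2]; ring
    set g : ℝ → ℝ := fun s => p s - u (A s) with hgdef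
    have hgd : ∀ᶠ s in 𝓝 (0:ℝ), DifferentiableAt ℝ g s := by
      filter_upwards [hpdiff, hq'] with s h1 h2
      exact h1.sub h2.differentiableAt
    have hgderiv : deriv g =ᶠ[𝓝 (0:ℝ)]
        fun s => deriv p s - deriv (fun s' => u (A s')) s := by
      filter_upwards [hpdiff, hq'] with s h1 h2
      simp only [hgdef]
      exact deriv_sub h1 h2.differentiableAt
    have hg2 : HasDerivAt (deriv g)
        ((if i = l then c * α * (α - 1) * (z l) ^ (α - 2) else -2 * ε) - Qi) 0 :=
      (hp2.sub hq2).congr_of_eventuallyEq hgderiv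
    have hgmax : IsLocalMax g 0 := by
      have htend : Filter.Tendsto A (𝓝 (0:ℝ)) (𝓝 z) := by
        have h := (hAderiv 0).continuousAt
        rwa [ContinuousAt, hA0] at h
      have hev := htend.eventually hzloc
      have hgoal : ∀ᶠ s in 𝓝 (0:ℝ), g s ≤ g 0 := by
        filter_upwards [hev] with s hs
        have h1 : g s = w (A s) := by
          simp only [hgdef, hwdef]
          rw [hpv s]
        have h2 : g 0 = w z := by
          simp only [hgdef, hwdef]
          rw [← hpv 0, hA0]
        rw [h1, h2]
        exact hs
      exact hgoal
    have htest := second_deriv_test hgd hg2 hgmax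
    linarith [htest]
  -- sum up the coordinate inequalities
  have hsum : ∑ i : Fin N, (if i = l then c * α * (α - 1) * (z l) ^ (α - 2) else -2 * ε)
      ≤ lapl u z := by
    rw [lapl]
    exact Finset.sum_le_sum fun i _ => key_i i
  have hsumval : ∑ i : Fin N, (if i = l then c * α * (α - 1) * (z l) ^ (α - 2) else -2 * ε)
      = c * α * (α - 1) * (z l) ^ (α - 2) + ((N:ℝ) - 1) * (-2 * ε) := by
    rw [← Finset.add_sum_erase _ _ (Finset.mem_univ l)]
    congr 1
    · rw [if_pos rfl]
    · rw [Finset.sum_congr rfl fun j hj => if_neg (Finset.mem_erase.mp hj).1,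
        Finset.sum_const, Finset.card_erase_of_mem (Finset.mem_univ l)]
      rw [Finset.card_univ, Fintype.card_fin, nsmul_eq_mul, Nat.cast_sub hN]
      norm_num
  have hlapl : lapl u z = -(u z) ^ (-γ) := by
    have h := sol.eq z hz1
    linarith
  have hmain : c * α * (α - 1) * (z l) ^ (α - 2) + ((N:ℝ) - 1) * (-2 * ε)
      ≤ -(u z) ^ (-γ) := by
    calc c * α * (α - 1) * (z l) ^ (α - 2) + ((N:ℝ) - 1) * (-2 * ε)
        = ∑ i : Fin N, (if i = l then c * α * (α - 1) * (z l) ^ (α - 2) else -2 * ε) :=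
          hsumval.symm
      _ ≤ lapl u z := hsum
      _ = -(u z) ^ (-γ) := hlapl
  -- lower bound on (u z)^(-γ)
  have hαγ : α * (-γ) = α - 2 := by rw [hαdef]; field_simp; ring
  have hlow : c ^ (-γ) * (z l) ^ (α - 2) < (u z) ^ (-γ) := by
    have h1 : u z < c * (z l) ^ α := lt_of_lt_of_le huv hvz
    have h2 := Real.rpow_lt_rpow_of_neg huz h1 (by linarith : -γ < 0)
    have h3 : (c * (z l) ^ α) ^ (-γ) = c ^ (-γ) * (z l) ^ (α - 2) := by
      rw [Real.mul_rpow hc.le (Real.rpow_nonneg hZ.le _), ← Real.rpow_mul hZ.le, hαγ]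
    rw [h3] at h2
    exact h2
  have hN1 : (1:ℝ) ≤ (N:ℝ) := by exact_mod_cast hN
  have hWR : R ^ (α - 2) < (z l) ^ (α - 2) :=
    Real.rpow_lt_rpow_of_neg hZ hzR (by linarith)
  have hεb : ε * (4 * (N:ℝ)) ≤ c ^ (-γ) * R ^ (α - 2) :=
    (le_div_iff₀ (by positivity)).mp hεsmall
  have e2 : c ^ (-γ) * (z l) ^ (α - 2) = 2 * α * (1 - α) * c * (z l) ^ (α - 2) := by
    rw [hcid]
  have e3 : c ^ (-γ) * R ^ (α - 2) = 2 * α * (1 - α) * c * R ^ (α - 2) := by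
    rw [hcid]
  have hpos1 : (0:ℝ) < c * α * (1 - α) := mul_pos (mul_pos hc hα0) h1α
  have F4 := mul_lt_mul_of_pos_left hWR hpos1
  linarith [hmain, hlow, e2, e3, F4, hεb, hε]

/-- for `γ > 1` there is a constant `C = C(γ) > 0` such that every
classical solution `u` of `(P_γ)` on the half space satisfies
`u(x) ≥ C · x_N^{2/(γ+1)}`. -/
theorem lower_bound_power (γ : ℝ) (hγ : 1 < γ) :
    ∃ C : ℝ, 0 < C ∧ ∀ (N : ℕ) (hN : 1 ≤ N) (u : EuclideanSpace ℝ (Fin N) → ℝ),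
      IsClassicalSolution N hN γ u →
      ∀ x ∈ halfSpace N hN, C * (x (lastIdx N hN)) ^ (2 / (γ + 1)) ≤ u x := by
  have hγ0 : (0:ℝ) < γ + 1 := by linarith
  set α : ℝ := 2 / (γ + 1) with hαdef
  have hα0 : 0 < α := by positivity
  have hα1 : α < 1 := by rw [hαdef, div_lt_one hγ0]; linarith
  set B : ℝ := 2 * α * (1 - α) with hBdef
  have hB : 0 < B := mul_pos (mul_pos two_pos hα0) (by linarith)
  set c : ℝ := B ^ (-(1 / (γ + 1))) with hcdef
  have hc : 0 < c := Real.rpow_pos_of_pos hB _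
  have hcid : c ^ (-γ) = B * c := by
    have hne : (1:ℝ) + -(1 / (γ + 1)) ≠ 0 := by
      rw [← sub_eq_add_neg]
      intro h
      have h2 : (1:ℝ) / (γ + 1) = 1 := by linarith
      rw [div_eq_one_iff_eq (ne_of_gt hγ0)] at h2
      linarith
    rw [hcdef, ← Real.rpow_mul hB.le, ← Real.rpow_one_add' hB.le hne]
    congr 1
    field_simp
    ring
  refine ⟨c, hc, ?_⟩
  intro N hN u sol x hx
  set l := lastIdx N hN with hldef
  set t := x l with htdef
  have ht : 0 < t := hx
  apply le_of_forall_pos_le_add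
  intro η hη
  set A : ℝ := ∑ j ∈ Finset.univ.erase l, (x j) ^ 2 with hAdef
  have hA0 : 0 ≤ A := Finset.sum_nonneg fun j _ => sq_nonneg _
  set δ : ℝ := η / (2 * t) with hδdef
  have hδ : 0 < δ := by positivity
  set R : ℝ := (c / δ) ^ ((1:ℝ) / (1 - α)) with hRdef
  have hR : 0 < R := Real.rpow_pos_of_pos (by positivity) _
  have hN0 : (0:ℝ) < N := by exact_mod_cast Nat.lt_of_lt_of_le Nat.zero_lt_one hN
  set ε : ℝ := min (η / (2 * (A + 1))) (c ^ (-γ) * R ^ (α - 2) / (4 * N)) with hεdef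
  have hε : 0 < ε := by
    have h1 : (0:ℝ) < c ^ (-γ) := Real.rpow_pos_of_pos hc _
    have h2 : (0:ℝ) < R ^ (α - 2) := Real.rpow_pos_of_pos hR _
    refine lt_min ?_ ?_ <;> positivity
  have hkey := key_comparison hN hγ sol hαdef hc hδ hε (by rw [hcid])
    (by rw [← hRdef]; exact min_le_right _ _) hx
  have h1 : δ * t = η / 2 := by rw [hδdef]; field_simp
  have h2 : ε * A ≤ η / 2 := by
    have h3 : ε ≤ η / (2 * (A + 1)) := min_le_left _ _
    have h4 : ε * A ≤ (η / (2 * (A + 1))) * A := mul_le_mul_of_nonneg_right h3 hA0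
    have h5 : (η / (2 * (A + 1))) * A ≤ η / 2 := by
      rw [div_mul_eq_mul_div, div_le_div_iff₀ (by positivity) two_pos]
      nlinarith
    linarith
  calc c * t ^ α ≤ u x + (δ * t + ε * A) := by linarith [hkey]
    _ ≤ u x + η := by rw [h1]; linarith
end

section
/- Let γ > 0 and let u ∈ C²((0,∞)) satisfy u(t) > 0 and u''(t) = -u(t)^{-γ} for all t > 0. Then u is unbounded above; in fact u(t) → +∞ as t → +∞. -/
open Real Set Filter

/-- a positive `C²` solution of `u'' = -u^{-γ}` on `(0,∞)` is
unbounded above; in fact `u(t) → +∞` as `t → +∞`. -/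
theorem ode_solution_unbounded (γ : ℝ) (hγ : 0 < γ) (u : ℝ → ℝ)
    (hu2 : ContDiffOn ℝ 2 u (Ioi (0 : ℝ)))
    (hupos : ∀ t > (0 : ℝ), 0 < u t)
    (hode : ∀ t > (0 : ℝ), deriv (deriv u) t = -((u t) ^ (-γ))) :
    Tendsto u atTop atTop := by
  -- basic differentiability facts
  have hdu : ∀ t > (0:ℝ), DifferentiableAt ℝ u t := by
    intro t ht
    exact ((hu2.differentiableOn (by norm_num)) t ht).differentiableAt
      (isOpen_Ioi.mem_nhds ht)
  have hucont : ContinuousOn u (Ioi 0) := hu2.continuousOn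
  have hv1 : ContDiffOn ℝ 1 (deriv u) (Ioi 0) :=
    hu2.deriv_of_isOpen isOpen_Ioi (by norm_num)
  have hvcont : ContinuousOn (deriv u) (Ioi 0) := hv1.continuousOn
  have hdv : ∀ t > (0:ℝ), DifferentiableAt ℝ (deriv u) t := by
    intro t ht
    exact ((hv1.differentiableOn (by norm_num)) t ht).differentiableAt
      (isOpen_Ioi.mem_nhds ht)
  -- deriv u is strictly antitone on (0,∞)
  have hvanti : StrictAntiOn (deriv u) (Ioi 0) := by
    refine strictAntiOn_of_deriv_neg (convex_Ioi 0) hvcont ?_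
    intro x hx
    rw [interior_Ioi] at hx
    rw [hode x hx]
    have := Real.rpow_pos_of_pos (hupos x hx) (-γ)
    linarith
  -- deriv u is positive on (0,∞)
  have hvpos : ∀ t > (0:ℝ), 0 < deriv u t := by
    intro t₀ ht₀
    by_contra hle
    push_neg at hle
    obtain ⟨a, ha⟩ : ∃ a : ℝ, a = t₀ + 1 := ⟨_, rfl⟩
    have ha0 : (0:ℝ) < a := by linarith
    obtain ⟨m, hm⟩ : ∃ m : ℝ, m = deriv u a := ⟨_, rfl⟩
    have hmneg : m < 0 := by
      rw [hm]
      exact lt_of_lt_of_le (hvanti (mem_Ioi.2 ht₀) (mem_Ioi.2 ha0) (by linarith)) hle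
    -- u s - m*s is strictly antitone on [a, ∞)
    have hanti : StrictAntiOn (fun s => u s - m * s) (Ici a) := by
      refine strictAntiOn_of_deriv_neg (convex_Ici a) ?_ ?_
      · exact (hucont.mono (fun x hx => lt_of_lt_of_le ha0 hx)).sub
          (continuousOn_const.mul continuousOn_id)
      · intro x hx
        rw [interior_Ici] at hx
        have hx0 : (0:ℝ) < x := lt_trans ha0 hx
        have hder : HasDerivAt (fun s => u s - m * s) (deriv u x - m) x := by
          exact ((hdu x hx0).hasDerivAt.sub ((hasDerivAt_id x).const_mul m)).congr_deriv (by simp)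
        rw [hder.deriv]
        have := hvanti (mem_Ioi.2 ha0) (mem_Ioi.2 hx0) hx
        rw [← hm] at this
        linarith
    have hua : 0 < u a := hupos a ha0
    have hfrac : 0 < u a / (-m) := div_pos hua (by linarith)
    obtain ⟨T, hT⟩ : ∃ T : ℝ, T = a + u a / (-m) + 1 := ⟨_, rfl⟩
    have haT : a < T := by rw [hT]; linarith
    have h1 : u T - m * T < u a - m * a := hanti (mem_Ici.2 le_rfl) (le_of_lt haT) haT
    have hTu : 0 < u T := hupos T (by linarith)
    have hkey : m * (T - a) = -(u a) + m := by
      rw [hT]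
      have hm0 : m ≠ 0 := ne_of_lt hmneg
      rw [div_neg]
      field_simp
      ring
    nlinarith [h1, hkey]
  -- u is strictly increasing on (0,∞)
  have humono : StrictMonoOn u (Ioi 0) := by
    refine strictMonoOn_of_deriv_pos (convex_Ioi 0) hucont ?_
    intro x hx
    rw [interior_Ioi] at hx
    exact hvpos x hx
  -- key unboundedness: for every b there is t > 0 with b ≤ u t
  have hunb : ∀ b : ℝ, ∃ t > (0:ℝ), b ≤ u t := by
    intro b
    by_contra hb
    push_neg at hb
    have hu1 : 0 < u 1 := hupos 1 one_pos
    have hb0 : 0 < b := lt_trans hu1 (hb 1 one_pos)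
    obtain ⟨c, hc⟩ : ∃ c : ℝ, c = b ^ (-γ) := ⟨_, rfl⟩
    have hcpos : 0 < c := hc ▸ Real.rpow_pos_of_pos hb0 (-γ)
    -- deriv u s + c * s is antitone on [1, ∞)
    have hanti : AntitoneOn (fun s => deriv u s + c * s) (Ici 1) := by
      refine antitoneOn_of_deriv_nonpos (convex_Ici 1) ?_ ?_ ?_
      · exact (hvcont.mono (fun x (hx : x ∈ Ici (1:ℝ)) => mem_Ioi.2 (lt_of_lt_of_le one_pos (mem_Ici.1 hx)))).add
          (continuousOn_const.mul continuousOn_id)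
      · rw [interior_Ici]
        intro x hx
        have hx0 : (0:ℝ) < x := lt_trans one_pos hx
        exact ((hdv x hx0).add ((differentiable_id.const_mul c) x)).differentiableWithinAt
      · intro x hx
        rw [interior_Ici] at hx
        have hx0 : (0:ℝ) < x := lt_trans one_pos hx
        have hder : HasDerivAt (fun s => deriv u s + c * s) (deriv (deriv u) x + c) x := by
          exact ((hdv x hx0).hasDerivAt.add ((hasDerivAt_id x).const_mul c)).congr_deriv (by simp)
        rw [hder.deriv, hode x hx0]
        have hle : c ≤ (u x) ^ (-γ) := by
          rw [hc]
          exact Real.rpow_le_rpow_of_nonpos (hupos x hx0) (le_of_lt (hb x hx0)) (by linarith)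
        linarith
    have hv1pos : 0 < deriv u 1 := hvpos 1 one_pos
    have hfrac : 0 < deriv u 1 / c := div_pos hv1pos hcpos
    obtain ⟨T, hT⟩ : ∃ T : ℝ, T = 1 + deriv u 1 / c + 1 := ⟨_, rfl⟩
    have h1T : (1:ℝ) ≤ T := by rw [hT]; linarith
    have h2 : deriv u T + c * T ≤ deriv u 1 + c * 1 := hanti (mem_Ici.2 le_rfl) h1T h1T
    have hvT : 0 < deriv u T := hvpos T (by linarith)
    have hkey : c * (T - 1) = deriv u 1 + c := by
      rw [hT]
      have hc0 : c ≠ 0 := ne_of_gt hcpos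
      field_simp
      ring
    nlinarith [h2, hkey]
  -- conclude
  rw [tendsto_atTop]
  intro b
  obtain ⟨t₀, ht₀, hbt₀⟩ := hunb b
  filter_upwards [eventually_ge_atTop (t₀ + 1)] with t ht
  have : u t₀ < u t := humono (mem_Ioi.2 ht₀) (mem_Ioi.2 (by linarith)) (by linarith)
  linarith
end

section
/- Let 0 < γ ≤ 1. Then there exists no function u ∈ C²((0,∞)) with u(t) > 0 and u''(t) = -u(t)^{-γ} for all t > 0. (Consequently the one-dimensional problem -u'' = u^{-γ} on (0,∞) with u > 0 and u(0) = 0 has no solution when 0 < γ ≤ 1.) -/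
open Real Set

/-- for `0 < γ ≤ 1` there is no positive `C²` solution of
`u'' = -u^{-γ}` on the half line `(0,∞)`. -/
theorem no_global_ode_solution (γ : ℝ) (hγ0 : 0 < γ) (hγ1 : γ ≤ 1) :
    ¬ ∃ u : ℝ → ℝ,
        ContDiffOn ℝ 2 u (Ioi (0 : ℝ)) ∧
        (∀ t > (0 : ℝ), 0 < u t) ∧
        (∀ t > (0 : ℝ), deriv (deriv u) t = -((u t) ^ (-γ))) := by
  rintro ⟨u, hreg, hpos, hode⟩
  set v : ℝ → ℝ := deriv u with hv
  have hopen : IsOpen (Ioi (0 : ℝ)) := isOpen_Ioi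
  -- u is differentiable on Ioi 0
  have hudiff : DifferentiableOn ℝ u (Ioi 0) := hreg.differentiableOn (by norm_num)
  have hvreg : ContDiffOn ℝ 1 v (Ioi 0) := by
    have := hreg.deriv_of_isOpen hopen (m := 1) (by norm_num)
    exact this
  have hvdiff : DifferentiableOn ℝ v (Ioi 0) := hvreg.differentiableOn (by norm_num)
  -- at each point of Ioi 0, u and v have derivatives (full deriv)
  have huAt : ∀ t ∈ Ioi (0:ℝ), HasDerivAt u (v t) t := fun t ht => by
    have := (hudiff t ht).differentiableAt (hopen.mem_nhds ht)
    exact this.hasDerivAt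
  have hvAt : ∀ t ∈ Ioi (0:ℝ), HasDerivAt v (-((u t) ^ (-γ))) t := fun t ht => by
    have h1 := (hvdiff t ht).differentiableAt (hopen.mem_nhds ht)
    have := h1.hasDerivAt
    rwa [hode t ht] at this
  -- v is strictly antitone on Ioi 0
  have hanti : StrictAntiOn v (Ioi 0) := by
    refine strictAntiOn_of_deriv_neg (convex_Ioi 0) hvdiff.continuousOn ?_
    intro x hx
    rw [interior_Ioi] at hx
    rw [hode x hx]
    simp only [neg_neg, neg_lt_zero]
    exact Real.rpow_pos_of_pos (hpos x hx) _
  -- mean value theorem helper for u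
  have hmvtu : ∀ a b : ℝ, 0 < a → a < b → ∃ c ∈ Ioo a b, v c = (u b - u a) / (b - a) := by
    intro a b ha hab
    refine exists_hasDerivAt_eq_slope u v hab ?_ ?_
    · exact hudiff.continuousOn.mono (fun x hx => lt_of_lt_of_le ha hx.1)
    · exact fun x hx => huAt x (lt_trans ha hx.1)
  have hmvtv : ∀ a b : ℝ, 0 < a → a < b →
      ∃ c ∈ Ioo a b, -((u c) ^ (-γ)) = (v b - v a) / (b - a) := by
    intro a b ha hab
    refine exists_hasDerivAt_eq_slope v (fun t => -((u t) ^ (-γ))) hab ?_ ?_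
    · exact hvdiff.continuousOn.mono (fun x hx => lt_of_lt_of_le ha hx.1)
    · exact fun x hx => hvAt x (lt_trans ha hx.1)
  -- Step 1: v ≥ 0 on Ioi 0
  have hvnonneg : ∀ t > (0:ℝ), 0 ≤ v t := by
    intro a ha
    by_contra hneg
    push_neg at hneg
    set b : ℝ := a + (u a) / (-(v a)) + 1 with hb
    have hua : 0 < u a := hpos a ha
    have hva : 0 < -(v a) := by linarith
    have hq : 0 < u a / (-(v a)) := div_pos hua hva
    have hab : a < b := by simp only [hb]; linarith
    obtain ⟨c, hc, hcslope⟩ := hmvtu a b ha hab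
    have hvc : v c < v a := hanti ha (lt_trans ha hc.1) hc.1
    have hub : u b - u a = v c * (b - a) := by
      rw [eq_div_iff (by linarith : b - a ≠ 0)] at hcslope
      linarith [hcslope]
    have hba : b - a = u a / (-(v a)) + 1 := by simp [hb]; ring
    have hprod : v c * (b - a) < v a * (b - a) := by
      apply mul_lt_mul_of_pos_right hvc
      linarith
    have hva2 : v a * (b - a) = -(u a) + v a := by
      rw [hba, mul_add, mul_one]
      have : v a * (u a / (-v a)) = -(u a) := by
        field_simp
        rw [div_self hneg.ne]
      rw [this]
    have : u b < 0 := by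
      have h1 : u b = u a + v c * (b - a) := by linarith
      have h2 : v c * (b - a) < -(u a) + v a := by rw [← hva2]; exact hprod
      linarith
    exact absurd (hpos b (lt_trans ha hab)) (not_lt.mpr this.le)
  -- Step 2: linear growth bound
  set C : ℝ := u 1 + v 1 with hC
  have hu1 : 0 < u 1 := hpos 1 one_pos
  have hv1 : 0 ≤ v 1 := hvnonneg 1 one_pos
  have hCpos : 0 < C := by positivity
  have hgrowth : ∀ t : ℝ, 1 ≤ t → u t ≤ C * t := by
    intro t ht
    rcases eq_or_lt_of_le ht with h | h
    · rw [← h]; simp only [mul_one, hC]; linarith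
    · obtain ⟨c, hc, hcslope⟩ := hmvtu 1 t one_pos h
      have hvc : v c < v 1 := hanti (mem_Ioi.mpr one_pos) (lt_trans one_pos hc.1) hc.1
      have hut : u t - u 1 = v c * (t - 1) := by
        rw [eq_div_iff (by linarith : t - 1 ≠ 0)] at hcslope
        linarith [hcslope]
      have h1 : v c * (t - 1) ≤ v 1 * (t - 1) := by nlinarith
      have h2 : v 1 * (t - 1) ≤ v 1 * t := by nlinarith
      have h3 : u 1 ≤ u 1 * t := by nlinarith
      calc u t = u 1 + v c * (t - 1) := by linarith
        _ ≤ u 1 * t + v 1 * t := by linarith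
        _ = C * t := by rw [hC]; ring
  -- Step 3: uniform decrease of v on doubling intervals
  set ε : ℝ := (2 * C) ^ (-γ) with hε
  have hεpos : 0 < ε := Real.rpow_pos_of_pos (by linarith) _
  have hstep : ∀ T : ℝ, 1 ≤ T → v (2 * T) ≤ v T - ε := by
    intro T hT
    have hT0 : 0 < T := lt_of_lt_of_le one_pos hT
    have h2T : T < 2 * T := by linarith
    obtain ⟨c, hc, hcslope⟩ := hmvtv T (2 * T) hT0 h2T
    have hc0 : 0 < c := lt_trans hT0 hc.1
    have hcle : u c ≤ 2 * C * T := by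
      calc u c ≤ C * c := hgrowth c (le_trans hT hc.1.le)
        _ ≤ C * (2 * T) := by nlinarith [hc.2]
        _ = 2 * C * T := by ring
    have hucpos : 0 < u c := hpos c hc0
    have hrpow : (2 * C * T) ^ (-γ) ≤ (u c) ^ (-γ) :=
      Real.rpow_le_rpow_of_nonpos hucpos hcle (by linarith)
    have hTpow : ε ≤ (2 * C * T) ^ (-γ) * T := by
      rw [Real.mul_rpow (by positivity) (by positivity)]
      have hT1 : (1:ℝ) ≤ T ^ (-γ) * T := by
        have : T ^ (-γ) * T = T ^ (1 - γ) := by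
          rw [sub_eq_add_neg, add_comm, Real.rpow_add hT0, Real.rpow_one]
        rw [this]
        exact Real.one_le_rpow hT (by linarith)
      calc ε = ε * 1 := (mul_one ε).symm
        _ ≤ (2 * C) ^ (-γ) * (T ^ (-γ) * T) := by
            rw [hε]; exact mul_le_mul_of_nonneg_left hT1 (Real.rpow_nonneg (by linarith) _)
        _ = (2 * C) ^ (-γ) * T ^ (-γ) * T := by ring
    have hslope2 : v (2 * T) - v T = -((u c) ^ (-γ)) * T := by
      have h21 : 2 * T - T = T := by ring
      rw [h21] at hcslope
      rw [eq_div_iff (by linarith : T ≠ 0)] at hcslope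
      linarith [hcslope]
    have h4 : ε ≤ (u c) ^ (-γ) * T := by
      calc ε ≤ (2 * C * T) ^ (-γ) * T := hTpow
        _ ≤ (u c) ^ (-γ) * T := mul_le_mul_of_nonneg_right hrpow hT0.le
    linarith [hslope2, h4]
  -- Step 4: iterate to get contradiction
  have hiter : ∀ n : ℕ, v (2 ^ n) ≤ v 1 - n * ε := by
    intro n
    induction n with
    | zero => simp
    | succ n ih =>
      have h1 : (1:ℝ) ≤ 2 ^ n := one_le_pow₀ one_le_two
      have := hstep (2 ^ n) h1
      have h2 : (2:ℝ) * 2 ^ n = 2 ^ (n + 1) := by ring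
      rw [h2] at this
      push_cast
      calc v (2 ^ (n+1)) ≤ v (2 ^ n) - ε := this
        _ ≤ v 1 - n * ε - ε := by linarith
        _ = v 1 - (n + 1) * ε := by ring
  obtain ⟨n, hn⟩ := exists_nat_gt (v 1 / ε)
  have h1 : v 1 < n * ε := by
    rwa [div_lt_iff₀ hεpos] at hn
  have h2 : 0 ≤ v (2 ^ n) := hvnonneg (2 ^ n) (by positivity)
  have := hiter n
  linarith
end
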